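/- arXiv:1511.02829 — 2 statements merged into one kernel-verified Lean document; each statement's English description precedes it below -/
import Mathlib

section
/- For every strict partition λ, D(1/H_λ) = 0; that is, Σ_{λ⁺: ℓ(λ⁺)>ℓ(λ)} 1/H_{λ⁺} + 2 Σ_{λ⁺: ℓ(λ⁺)=ℓ(λ)} 1/H_{λ⁺} = 1/H_λ, where λ⁺ ranges over strict partitions obtained from λ by adding one box. -/
open scoped BigOperators

/-- A strict partition: a strictly decreasing list of positive integers. -/
structure StrictPartition where
  parts : List ℕ
  pos : ∀ p ∈ parts, 0 < p
  sorted : parts.Pairwise (· > ·)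

namespace StrictPartition

/-- The `i`-th part (1-indexed); `0` for `i` beyond the length. -/
def part (lam : StrictPartition) (i : ℕ) : ℕ := lam.parts.getD (i - 1) 0

/-- The size `|λ|` of a strict partition. -/
def size (lam : StrictPartition) : ℕ := lam.parts.sum

/-- The length `ℓ(λ)` (number of parts) of a strict partition. -/
def length (lam : StrictPartition) : ℕ := lam.parts.length

/-- The cells of the shifted Young diagram: row `i` occupies columns `i+1, …, i+λᵢ`. -/
def cells (lam : StrictPartition) : Finset (ℕ × ℕ) :=
  (Finset.range (lam.size + lam.length + 2) ×ˢ
      Finset.range (lam.size + lam.length + 2)).filter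
    (fun b => 1 ≤ b.1 ∧ b.1 < b.2 ∧ b.2 ≤ b.1 + lam.part b.1)

/-- The content of a box `(i,j)` is `j - i`. -/
def content (b : ℕ × ℕ) : ℕ := b.2 - b.1

/-- The hook length of a box `(i,j)`: the number of boxes strictly below it in its
column, plus the number strictly to its right in its row, plus `1`, plus `λ_j`. -/
def hook (lam : StrictPartition) (b : ℕ × ℕ) : ℕ :=
  (lam.cells.filter (fun b' => b'.2 = b.2 ∧ b.1 < b'.1)).card +
  (lam.cells.filter (fun b' => b'.1 = b.1 ∧ b.2 < b'.2)).card + 1 + lam.part b.2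

/-- `H_λ`, the product of the hook lengths of all boxes of `λ`. -/
def H (lam : StrictPartition) : ℕ := ∏ b ∈ lam.cells, lam.hook b

/-- `μ ≤ λ` iff `μᵢ ≤ λᵢ` for all `i`. -/
instance : LE StrictPartition := ⟨fun mu lam => ∀ i, mu.part i ≤ lam.part i⟩

/-- The cells of the skew shifted diagram `λ/μ`. -/
def skewCells (mu lam : StrictPartition) : Finset (ℕ × ℕ) := lam.cells \ mu.cells

/-- `f_{λ/μ}`: the number of standard shifted Young tableaux of skew shape `λ/μ`,
i.e. bijective fillings of the cells of `λ/μ` with `0, 1, …, n-1` increasing along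
rows and columns. -/
noncomputable def fskew (mu lam : StrictPartition) : ℕ :=
  Nat.card {T : {b // b ∈ skewCells mu lam} → Fin (skewCells mu lam).card //
    Function.Bijective T ∧
    (∀ a b : {b // b ∈ skewCells mu lam},
      (a : ℕ × ℕ).1 = (b : ℕ × ℕ).1 → (a : ℕ × ℕ).2 < (b : ℕ × ℕ).2 → T a < T b) ∧
    (∀ a b : {b // b ∈ skewCells mu lam},
      (a : ℕ × ℕ).2 = (b : ℕ × ℕ).2 → (a : ℕ × ℕ).1 < (b : ℕ × ℕ).1 → T a < T b)}

/-- The empty strict partition. -/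
def empty : StrictPartition := ⟨[], by simp, List.Pairwise.nil⟩

/-- `f_λ`: the number of standard shifted Young tableaux of shape `λ`. -/
noncomputable def f (lam : StrictPartition) : ℕ := fskew empty lam

/-- `f'_{λ/μ} = 2^{|λ|-|μ|-ℓ(λ)+ℓ(μ)} f_{λ/μ}`. -/
noncomputable def fPrime (mu lam : StrictPartition) : ℚ :=
  (2 : ℚ) ^ ((lam.size : ℤ) - mu.size - lam.length + mu.length) * fskew mu lam

/-- `λ⁺` is obtained from `λ` by adding one box. -/
def AddBox (lam lam' : StrictPartition) : Prop := lam ≤ lam' ∧ lam'.size = lam.size + 1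

/-- The difference operator `D` for strict partitions. -/
noncomputable def D (g : StrictPartition → ℚ) (lam : StrictPartition) : ℚ :=
  (∑ᶠ nu ∈ {nu : StrictPartition | lam.AddBox nu ∧ lam.length < nu.length}, g nu) +
  2 * (∑ᶠ nu ∈ {nu : StrictPartition | lam.AddBox nu ∧ nu.length = lam.length}, g nu) -
  g lam

/-- The boxes that can be removed from `λ` leaving (the diagram of) a strict
partition: the outer corners. -/
def removableCells (lam : StrictPartition) : Set (ℕ × ℕ) :=
  {b | b ∈ lam.cells ∧ ∃ mu : StrictPartition, mu.cells = lam.cells.erase b}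

/-- The boxes that can be added to `λ` giving (the diagram of) a strict partition. -/
def addableCells (lam : StrictPartition) : Set (ℕ × ℕ) :=
  {b | b ∉ lam.cells ∧ ∃ mu : StrictPartition, mu.cells = insert b lam.cells}

/-- The contents `x_0 = 1 < x_1 < ⋯ < x_m` of the inner corners of `λ`. -/
def innerContents (lam : StrictPartition) : Set ℕ :=
  insert 1 (content '' lam.addableCells)

/-- The contents `y_1 < ⋯ < y_m` of the outer corners of `λ`. -/
def outerContents (lam : StrictPartition) : Set ℕ :=
  content '' lam.removableCells

/-- `q_k(λ) = ∑_{i=0}^m C(xᵢ,2)^k − ∑_{i=1}^m C(yᵢ,2)^k`. -/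
noncomputable def q (k : ℕ) (lam : StrictPartition) : ℚ :=
  (∑ᶠ c ∈ lam.innerContents, ((c.choose 2 : ℚ)) ^ k) -
  (∑ᶠ c ∈ lam.outerContents, ((c.choose 2 : ℚ)) ^ k)

/-- `q_ν(λ) = ∏_j q_{ν_j}(λ)` for a partition `ν` given as a multiset of parts. -/
noncomputable def qPart (nu : Multiset ℕ) (lam : StrictPartition) : ℚ :=
  (nu.map (fun k => q k lam)).prod

end StrictPartition
namespace SP13
open StrictPartition Finset

variable (lam : StrictPartition)

lemma part_eq_zero (i : ℕ) (h : lam.length < i) : lam.part i = 0 := by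
  unfold StrictPartition.part
  apply List.getD_eq_default
  unfold StrictPartition.length at h
  omega

lemma part_pos (i : ℕ) (h1 : 1 ≤ i) (h2 : i ≤ lam.length) : 0 < lam.part i := by
  unfold StrictPartition.part
  have hlt : i - 1 < lam.parts.length := by unfold StrictPartition.length at h2; omega
  rw [List.getD_eq_getElem _ _ hlt]
  exact lam.pos _ (List.getElem_mem hlt)

lemma part_lt_part (i j : ℕ) (h1 : 1 ≤ i) (hij : i < j) (hj : j ≤ lam.length) :
    lam.part j < lam.part i := by
  unfold StrictPartition.part
  have hi : i - 1 < lam.parts.length := by unfold StrictPartition.length at hj; omega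
  have hjl : j - 1 < lam.parts.length := by unfold StrictPartition.length at hj; omega
  rw [List.getD_eq_getElem _ _ hi, List.getD_eq_getElem _ _ hjl]
  have := List.pairwise_iff_get.mp lam.sorted ⟨i-1, hi⟩ ⟨j-1, hjl⟩ (by simp; omega)
  simpa using this

lemma part_staircase (i j : ℕ) (h1 : 1 ≤ i) (hij : i ≤ j) (hj : j ≤ lam.length) :
    lam.part j + (j - i) ≤ lam.part i := by
  induction j with
  | zero => omega
  | succ n ih =>
    rcases Nat.eq_or_lt_of_le hij with h | h
    · subst h; omega
    · have hn : i ≤ n := by omega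
      have := ih hn (by omega)
      have h2 := part_lt_part lam n (n+1) (by omega) (by omega) hj
      omega

lemma list_len_le_sum (l : List ℕ) (h : ∀ p ∈ l, 0 < p) : l.length ≤ l.sum := by
  induction l with
  | nil => simp
  | cons a t ih =>
    simp only [List.length_cons, List.sum_cons]
    have ha := h a (by simp)
    have := ih (fun p hp => h p (List.mem_cons_of_mem _ hp))
    omega

lemma length_le_size : lam.length ≤ lam.size :=
  list_len_le_sum lam.parts lam.pos

lemma part_le_size (i : ℕ) : lam.part i ≤ lam.size := by
  by_cases h : i - 1 < lam.parts.length
  · unfold StrictPartition.part StrictPartition.size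
    rw [List.getD_eq_getElem _ _ h]
    exact List.single_le_sum (fun x _ => Nat.zero_le x) _ (List.getElem_mem h)
  · unfold StrictPartition.part StrictPartition.size
    rw [List.getD_eq_default _ _ (by omega)]
    exact Nat.zero_le _

lemma mem_cells (b : ℕ × ℕ) :
    b ∈ lam.cells ↔ 1 ≤ b.1 ∧ b.1 < b.2 ∧ b.2 ≤ b.1 + lam.part b.1 := by
  unfold StrictPartition.cells
  rw [Finset.mem_filter]
  constructor
  · tauto
  · intro h
    refine ⟨?_, h⟩
    have hpos : 0 < lam.part b.1 := by omega
    have hb1 : b.1 ≤ lam.length := by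
      by_contra hc
      rw [part_eq_zero lam b.1 (by omega)] at hpos; omega
    have := part_le_size lam b.1
    have := length_le_size lam
    simp only [Finset.mem_product, Finset.mem_range]
    omega

lemma row_eq (i : ℕ) (hi : 1 ≤ i) :
    lam.cells.filter (fun b => b.1 = i) = (Finset.Ioc i (i + lam.part i)).image (fun j => (i, j)) := by
  ext ⟨x, y⟩
  simp only [Finset.mem_filter, Finset.mem_image, Finset.mem_Ioc, mem_cells]
  constructor
  · rintro ⟨⟨h1, h2, h3⟩, rfl⟩
    exact ⟨y, ⟨h2, h3⟩, rfl⟩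
  · rintro ⟨j, ⟨hj1, hj2⟩, h⟩
    cases h
    exact ⟨⟨hi, hj1, hj2⟩, rfl⟩

lemma mem_cells' (i j : ℕ) :
    (i, j) ∈ lam.cells ↔ 1 ≤ i ∧ i < j ∧ j ≤ i + lam.part i := mem_cells lam (i, j)

end SP13
namespace SP13
open StrictPartition Finset

variable (lam : StrictPartition)

lemma col_filter (i j : ℕ) (h1 : 1 ≤ i) :
    lam.cells.filter (fun b' => b'.2 = j ∧ i < b'.1) =
      ((Finset.Ioo i j).filter (fun i' => j ≤ i' + lam.part i')).image (fun i' => (i', j)) := by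
  ext ⟨x, y⟩
  simp only [Finset.mem_filter, Finset.mem_image, Finset.mem_Ioo, mem_cells]
  constructor
  · rintro ⟨⟨hx, hxy, hle⟩, rfl, hix⟩
    exact ⟨x, ⟨⟨hix, hxy⟩, hle⟩, rfl⟩
  · rintro ⟨i', ⟨⟨hii', hi'j⟩, hle⟩, h⟩
    cases h
    exact ⟨⟨by omega, hi'j, hle⟩, rfl, hii'⟩

lemma arm_filter (i j : ℕ) (h1 : 1 ≤ i) (hij : i ≤ j) :
    lam.cells.filter (fun b' => b'.1 = i ∧ j < b'.2) =
      (Finset.Ioc j (i + lam.part i)).image (fun j' => (i, j')) := by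
  ext ⟨x, y⟩
  simp only [Finset.mem_filter, Finset.mem_image, Finset.mem_Ioc, mem_cells]
  constructor
  · rintro ⟨⟨hx, hxy, hle⟩, rfl, hjy⟩
    exact ⟨y, ⟨hjy, hle⟩, rfl⟩
  · rintro ⟨j', ⟨hjj', hle⟩, h⟩
    cases h
    exact ⟨⟨h1, by omega, hle⟩, rfl, hjj'⟩

lemma hook_formula (i j : ℕ) (h1 : 1 ≤ i) (hij : i ≤ j) :
    lam.hook (i, j) =
      ((Finset.Ioo i j).filter (fun i' => j ≤ i' + lam.part i')).card +
      ((i + lam.part i) - j) + 1 + lam.part j := by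
  unfold StrictPartition.hook
  rw [col_filter lam i j h1, arm_filter lam i j h1 hij]
  rw [Finset.card_image_of_injective _ (fun a b h => by simpa using h),
    Finset.card_image_of_injective _ (fun a b h => by simpa using h)]
  simp [Nat.card_Ioc]

lemma hook_low (i j : ℕ) (h1 : 1 ≤ i) (hij : i < j) (hj : j ≤ lam.length)
    (hcell : j ≤ i + lam.part i) :
    lam.hook (i, j) = lam.part i + lam.part j := by
  rw [hook_formula lam i j h1 (le_of_lt hij)]
  have hfilter : (Finset.Ioo i j).filter (fun i' => j ≤ i' + lam.part i') = Finset.Ioo i j := by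
    apply Finset.filter_true_of_mem
    intro i' hi'
    simp only [Finset.mem_Ioo] at hi'
    have := part_staircase lam i' j (by omega) (by omega) hj
    omega
  rw [hfilter, Nat.card_Ioo]
  omega

/-- The leg count relevant for boxes beyond column `ℓ`. -/
def Nf (i j : ℕ) : ℕ := ((Finset.Ioc i lam.length).filter (fun i' => j ≤ i' + lam.part i')).card

lemma hook_high (i j : ℕ) (h1 : 1 ≤ i) (hij0 : i < j) (hℓ : lam.length < j)
    (hcell : j ≤ i + lam.part i) :
    lam.hook (i, j) + j = lam.part i + i + 1 + Nf lam i j := by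
  have hij : i ≤ lam.length := by
    by_contra hc
    have := part_eq_zero lam i (by omega); omega
  rw [hook_formula lam i j h1 (by omega)]
  have hfilter : (Finset.Ioo i j).filter (fun i' => j ≤ i' + lam.part i') =
      (Finset.Ioc i lam.length).filter (fun i' => j ≤ i' + lam.part i') := by
    ext i'
    simp only [Finset.mem_filter, Finset.mem_Ioo, Finset.mem_Ioc]
    constructor
    · rintro ⟨⟨hii', hi'j⟩, hle⟩
      refine ⟨⟨hii', ?_⟩, hle⟩
      by_contra hc
      have := part_eq_zero lam i' (by omega); omega
    · rintro ⟨⟨hii', hi'ℓ⟩, hle⟩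
      exact ⟨⟨hii', by omega⟩, hle⟩
  rw [part_eq_zero lam j hℓ, hfilter]
  unfold Nf
  omega

lemma Nf_anti (i j j' : ℕ) (h : j ≤ j') : Nf lam i j' ≤ Nf lam i j := by
  apply Finset.card_le_card
  intro x hx
  simp only [Finset.mem_filter] at hx ⊢
  exact ⟨hx.1, by omega⟩

lemma Nf_le (i : ℕ) : Nf lam i (lam.length + 1) = lam.length - i := by
  unfold Nf
  rw [Finset.filter_true_of_mem, Nat.card_Ioc]
  intro i' hi'
  simp only [Finset.mem_Ioc] at hi'
  have := part_staircase lam i' lam.length (by omega) (by omega) (le_refl _)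
  have := part_pos lam lam.length (by omega) (le_refl _)
  omega

lemma Nf_ge_k (i k : ℕ) (hik : i < k) (hk : k ≤ lam.length) :
    k - i ≤ Nf lam i (lam.part k + k) := by
  unfold Nf
  calc k - i = (Finset.Ioc i k).card := by rw [Nat.card_Ioc]
  _ ≤ _ := by
    apply Finset.card_le_card
    intro i' hi'
    simp only [Finset.mem_Ioc, Finset.mem_filter] at hi' ⊢
    have := part_staircase lam i' k (by omega) (by omega) hk
    refine ⟨⟨hi'.1, by omega⟩, by omega⟩

lemma Nf_lt_k (i k : ℕ) (hik : i < k) (hk : k ≤ lam.length) :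
    Nf lam i (lam.part k + k + 1) ≤ k - 1 - i := by
  unfold Nf
  calc ((Finset.Ioc i lam.length).filter (fun i' => lam.part k + k + 1 ≤ i' + lam.part i')).card
      ≤ (Finset.Ioc i (k-1)).card := by
        apply Finset.card_le_card
        intro i' hi'
        simp only [Finset.mem_Ioc, Finset.mem_filter] at hi' ⊢
        refine ⟨hi'.1.1, ?_⟩
        by_contra hc
        -- i' ≥ k, so part i' + i' ≤ part k + k
        have : lam.part i' + (i' - k) ≤ lam.part k := part_staircase lam k i' (by omega) (by omega) hi'.1.2
        omega
  _ = k - 1 - i := Nat.card_Ioc _ _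

end SP13
namespace SP13
open StrictPartition Finset

variable (lam : StrictPartition)

lemma prod_Icc_id_factorial (n : ℕ) : (∏ x ∈ Finset.Icc 1 n, x) = Nat.factorial n := by
  induction n with
  | zero => simp
  | succ m ih =>
    rw [Finset.prod_Icc_succ_top (by omega), ih, Nat.factorial_succ, mul_comm]

lemma hook_row_anti (i j j' : ℕ) (h1 : 1 ≤ i) (hiℓ : i ≤ lam.length) (hj : lam.length < j)
    (hjj : j ≤ j') (hj' : j' ≤ i + lam.part i) :
    lam.hook (i, j') + (j' - j) ≤ lam.hook (i, j) := by
  have e1 := hook_high lam i j h1 (by omega) hj (by omega)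
  have e2 := hook_high lam i j' h1 (by omega) (by omega) hj'
  have := Nf_anti lam i j j' hjj
  omega

lemma hook_row_pos (i j : ℕ) (h1 : 1 ≤ i) (hiℓ : i ≤ lam.length) (hj : lam.length < j)
    (hj' : j ≤ i + lam.part i) :
    1 ≤ lam.hook (i, j) := by
  have e1 := hook_high lam i j h1 (by omega) hj hj'
  omega

lemma hook_row_le (i j : ℕ) (h1 : 1 ≤ i) (hiℓ : i ≤ lam.length) (hj : lam.length < j)
    (hj' : j ≤ i + lam.part i) :
    lam.hook (i, j) ≤ lam.part i := by
  have e1 := hook_high lam i j h1 (by omega) hj hj'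
  have e2 : Nf lam i j ≤ lam.length - i := by
    rw [← Nf_le lam i]
    exact Nf_anti lam i (lam.length + 1) j (by omega)
  omega

lemma hook_row_ne (i j k : ℕ) (h1 : 1 ≤ i) (hj : lam.length < j) (hj' : j ≤ i + lam.part i)
    (hik : i < k) (hk : k ≤ lam.length) :
    lam.hook (i, j) ≠ lam.part i - lam.part k := by
  have hiℓ : i ≤ lam.length := by omega
  have hstair_ik : lam.part k + (k - i) ≤ lam.part i := part_staircase lam i k h1 (by omega) hk
  have hstair_kℓ : lam.part lam.length + (lam.length - k) ≤ lam.part k :=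
    part_staircase lam k lam.length (by omega) (by omega) (le_refl _)
  have hposℓ : 0 < lam.part lam.length := part_pos lam lam.length (by omega) (le_refl _)
  have hjk_low : lam.length < lam.part k + k := by omega
  have hjk_high : lam.part k + k ≤ i + lam.part i := by omega
  have ejk := hook_high lam i (lam.part k + k) h1 (by omega) hjk_low hjk_high
  have hNge := Nf_ge_k lam i k hik hk
  rcases le_or_gt j (lam.part k + k) with hle | hlt
  · have := hook_row_anti lam i j (lam.part k + k) h1 hiℓ hj hle hjk_high
    omega
  · have hjk1 : lam.part k + k + 1 ≤ i + lam.part i := by omega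
    have ejk1 := hook_high lam i (lam.part k + k + 1) h1 (by omega) (by omega) hjk1
    have hNlt := Nf_lt_k lam i k hik hk
    have := hook_row_anti lam i (lam.part k + k + 1) j h1 hiℓ (by omega) (by omega) hj'
    omega

lemma row_high_image (i : ℕ) (h1 : 1 ≤ i) (hiℓ : i ≤ lam.length) :
    (Finset.Ioc lam.length (i + lam.part i)).image (fun j => lam.hook (i, j)) =
      Finset.Icc 1 (lam.part i) \
        ((Finset.Ioc i lam.length).image (fun k => lam.part i - lam.part k)) := by
  have hstair : lam.part lam.length + (lam.length - i) ≤ lam.part i :=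
    part_staircase lam i lam.length h1 hiℓ (le_refl _)
  have hposℓ : 0 < lam.part lam.length := part_pos lam lam.length (by omega) (le_refl _)
  have hsub : ((Finset.Ioc i lam.length).image (fun k => lam.part i - lam.part k)) ⊆
      Finset.Icc 1 (lam.part i) := by
    intro v hv
    simp only [Finset.mem_image, Finset.mem_Ioc] at hv
    obtain ⟨k, ⟨hik, hk⟩, rfl⟩ := hv
    have := part_lt_part lam i k h1 hik hk
    simp only [Finset.mem_Icc]
    omega
  have hinj2 : Set.InjOn (fun k => lam.part i - lam.part k) (Finset.Ioc i lam.length) := by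
    intro x hx y hy hxy
    simp only [Finset.coe_Ioc, Set.mem_Ioc] at hx hy
    simp only at hxy
    have h1x := part_lt_part lam i x h1 hx.1 hx.2
    have h1y := part_lt_part lam i y h1 hy.1 hy.2
    by_contra hne
    rcases Nat.lt_or_ge x y with h | h
    · have := part_lt_part lam x y (by omega) h hy.2; omega
    · have := part_lt_part lam y x (by omega) (by omega) hx.2; omega
  have hinj1 : Set.InjOn (fun j => lam.hook (i, j)) (Finset.Ioc lam.length (i + lam.part i)) := by
    intro x hx y hy hxy
    simp only [Finset.coe_Ioc, Set.mem_Ioc] at hx hy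
    simp only at hxy
    by_contra hne
    rcases Nat.lt_or_ge x y with h | h
    · have := hook_row_anti lam i x y h1 hiℓ hx.1 (by omega) hy.2; omega
    · have := hook_row_anti lam i y x h1 hiℓ hy.1 (by omega) hx.2; omega
  apply Finset.eq_of_subset_of_card_le
  · intro v hv
    simp only [Finset.mem_image, Finset.mem_Ioc] at hv
    obtain ⟨j, ⟨hj1, hj2⟩, rfl⟩ := hv
    rw [Finset.mem_sdiff]
    constructor
    · simp only [Finset.mem_Icc]
      exact ⟨hook_row_pos lam i j h1 hiℓ hj1 hj2, hook_row_le lam i j h1 hiℓ hj1 hj2⟩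
    · simp only [Finset.mem_image, Finset.mem_Ioc, not_exists]
      rintro k ⟨⟨hik, hk⟩, heq⟩
      exact hook_row_ne lam i j k h1 hj1 hj2 hik hk heq.symm
  · rw [Finset.card_sdiff_of_subset hsub, Finset.card_image_of_injOn hinj2,
      Finset.card_image_of_injOn hinj1]
    rw [Nat.card_Icc, Nat.card_Ioc, Nat.card_Ioc]
    omega

lemma row_high_prod (i : ℕ) (h1 : 1 ≤ i) (hiℓ : i ≤ lam.length) :
    (∏ j ∈ Finset.Ioc lam.length (i + lam.part i), lam.hook (i, j)) *
      (∏ k ∈ Finset.Ioc i lam.length, (lam.part i - lam.part k)) =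
      Nat.factorial (lam.part i) := by
  have hstair : lam.part lam.length + (lam.length - i) ≤ lam.part i :=
    part_staircase lam i lam.length h1 hiℓ (le_refl _)
  have hposℓ : 0 < lam.part lam.length := part_pos lam lam.length (by omega) (le_refl _)
  have hsub : ((Finset.Ioc i lam.length).image (fun k => lam.part i - lam.part k)) ⊆
      Finset.Icc 1 (lam.part i) := by
    intro v hv
    simp only [Finset.mem_image, Finset.mem_Ioc] at hv
    obtain ⟨k, ⟨hik, hk⟩, rfl⟩ := hv
    have := part_lt_part lam i k h1 hik hk
    simp only [Finset.mem_Icc]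
    omega
  have hinj2 : Set.InjOn (fun k => lam.part i - lam.part k) (Finset.Ioc i lam.length) := by
    intro x hx y hy hxy
    simp only [Finset.coe_Ioc, Set.mem_Ioc] at hx hy
    simp only at hxy
    have h1x := part_lt_part lam i x h1 hx.1 hx.2
    have h1y := part_lt_part lam i y h1 hy.1 hy.2
    by_contra hne
    rcases Nat.lt_or_ge x y with h | h
    · have := part_lt_part lam x y (by omega) h hy.2; omega
    · have := part_lt_part lam y x (by omega) (by omega) hx.2; omega
  have hinj1 : Set.InjOn (fun j => lam.hook (i, j)) (Finset.Ioc lam.length (i + lam.part i)) := by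
    intro x hx y hy hxy
    simp only [Finset.coe_Ioc, Set.mem_Ioc] at hx hy
    simp only at hxy
    by_contra hne
    rcases Nat.lt_or_ge x y with h | h
    · have := hook_row_anti lam i x y h1 hiℓ hx.1 (by omega) hy.2; omega
    · have := hook_row_anti lam i y x h1 hiℓ hy.1 (by omega) hx.2; omega
  have e1 : (∏ j ∈ Finset.Ioc lam.length (i + lam.part i), lam.hook (i, j)) =
      ∏ v ∈ (Finset.Ioc lam.length (i + lam.part i)).image (fun j => lam.hook (i, j)), v := by
    rw [Finset.prod_image]
    exact fun x hx y hy => hinj1 (Finset.mem_coe.mpr hx) (Finset.mem_coe.mpr hy)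
  have e2 : (∏ k ∈ Finset.Ioc i lam.length, (lam.part i - lam.part k)) =
      ∏ v ∈ (Finset.Ioc i lam.length).image (fun k => lam.part i - lam.part k), v := by
    rw [Finset.prod_image]
    exact fun x hx y hy => hinj2 (Finset.mem_coe.mpr hx) (Finset.mem_coe.mpr hy)
  rw [e1, e2, row_high_image lam i h1 hiℓ, ← prod_Icc_id_factorial (lam.part i)]
  exact Finset.prod_sdiff hsub

lemma row_prod (i : ℕ) (h1 : 1 ≤ i) (hiℓ : i ≤ lam.length) :
    (∏ j ∈ Finset.Ioc i (i + lam.part i), lam.hook (i, j)) *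
      (∏ k ∈ Finset.Ioc i lam.length, (lam.part i - lam.part k)) =
      Nat.factorial (lam.part i) * ∏ j ∈ Finset.Ioc i lam.length, (lam.part i + lam.part j) := by
  have hstair : lam.part lam.length + (lam.length - i) ≤ lam.part i :=
    part_staircase lam i lam.length h1 hiℓ (le_refl _)
  have hposℓ : 0 < lam.part lam.length := part_pos lam lam.length (by omega) (le_refl _)
  have hsplit : Finset.Ioc i lam.length ∪ Finset.Ioc lam.length (i + lam.part i) =
      Finset.Ioc i (i + lam.part i) :=
    Finset.Ioc_union_Ioc_eq_Ioc hiℓ (by omega)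
  have hdisj : Disjoint (Finset.Ioc i lam.length)
      (Finset.Ioc lam.length (i + lam.part i)) := by
    apply Finset.disjoint_left.mpr
    intro x hx hy
    simp only [Finset.mem_Ioc] at hx hy
    omega
  rw [← hsplit, Finset.prod_union hdisj]
  have hlow : (∏ j ∈ Finset.Ioc i lam.length, lam.hook (i, j)) =
      ∏ j ∈ Finset.Ioc i lam.length, (lam.part i + lam.part j) := by
    apply Finset.prod_congr rfl
    intro j hj
    simp only [Finset.mem_Ioc] at hj
    have := part_staircase lam i j h1 (by omega) hj.2
    exact hook_low lam i j h1 hj.1 hj.2 (by omega)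
  rw [hlow]
  rw [mul_assoc, row_high_prod lam i h1 hiℓ]
  ring

lemma cells_biUnion :
    lam.cells = (Finset.Icc 1 lam.length).biUnion
      (fun i => (Finset.Ioc i (i + lam.part i)).image (fun j => (i, j))) := by
  ext ⟨x, y⟩
  simp only [mem_cells, Finset.mem_biUnion, Finset.mem_Icc, Finset.mem_image, Finset.mem_Ioc]
  constructor
  · rintro ⟨h1, h2, h3⟩
    have hx : x ≤ lam.length := by
      by_contra hc
      have := part_eq_zero lam x (by omega); omega
    exact ⟨x, ⟨h1, hx⟩, y, ⟨h2, h3⟩, rfl⟩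
  · rintro ⟨i, ⟨hi1, hi2⟩, j, ⟨hj1, hj2⟩, h⟩
    cases h
    exact ⟨hi1, hj1, hj2⟩

lemma H_eq : lam.H =
    ∏ i ∈ Finset.Icc 1 lam.length, ∏ j ∈ Finset.Ioc i (i + lam.part i), lam.hook (i, j) := by
  unfold StrictPartition.H
  rw [cells_biUnion lam]
  rw [Finset.prod_biUnion]
  · apply Finset.prod_congr rfl
    intro i _
    rw [Finset.prod_image]
    intro x _ y _ h
    simpa using h
  · intro s hs t ht hst
    apply Finset.disjoint_left.mpr
    rintro ⟨x, y⟩ hx hy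
    simp only [Finset.mem_image, Finset.mem_Ioc] at hx hy
    obtain ⟨j, _, hj⟩ := hx
    obtain ⟨j', _, hj'⟩ := hy
    apply hst
    cases hj; cases hj'; rfl

theorem H_formula :
    lam.H * ∏ i ∈ Finset.Icc 1 lam.length,
        ∏ k ∈ Finset.Ioc i lam.length, (lam.part i - lam.part k) =
      (∏ i ∈ Finset.Icc 1 lam.length, Nat.factorial (lam.part i)) *
        ∏ i ∈ Finset.Icc 1 lam.length,
          ∏ k ∈ Finset.Ioc i lam.length, (lam.part i + lam.part k) := by
  rw [H_eq lam, ← Finset.prod_mul_distrib, ← Finset.prod_mul_distrib]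
  apply Finset.prod_congr rfl
  intro i hi
  simp only [Finset.mem_Icc] at hi
  exact row_prod lam i hi.1 hi.2

end SP13
namespace SP13
open Finset Polynomial

lemma leadingCoeff_lagrange_basis {F : Type*} [Field F] (s : Finset ℕ) (v : ℕ → F)
    (hvs : Set.InjOn v ↑s) (i : ℕ) (hi : i ∈ s) :
    (Lagrange.basis s v i).leadingCoeff = ∏ j ∈ s.erase i, (v i - v j)⁻¹ := by
  unfold Lagrange.basis
  rw [Polynomial.leadingCoeff_prod]
  apply Finset.prod_congr rfl
  intro j hj
  have hne : v i ≠ v j := by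
    intro h
    exact (Finset.mem_erase.mp hj).1 (hvs (Finset.mem_of_mem_erase hj) hi h.symm)
  unfold Lagrange.basisDivisor
  rw [Polynomial.leadingCoeff_mul, Polynomial.leadingCoeff_C,
    (Polynomial.monic_X_sub_C _).leadingCoeff, mul_one]

lemma lagrange_identity {F : Type*} [Field F] (s : Finset ℕ) (v y : ℕ → F)
    (hvs : Set.InjOn v ↑s) (i₀ : ℕ) (hi₀ : i₀ ∈ s) :
    ∑ i ∈ s, (∏ j ∈ s.erase i₀, (v i - y j)) / (∏ j ∈ s.erase i, (v i - v j)) = 1 := by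
  classical
  set f := Lagrange.nodal (s.erase i₀) y with hf
  have hcard : 0 < s.card := Finset.card_pos.mpr ⟨i₀, hi₀⟩
  have hmonic : f.Monic := Lagrange.nodal_monic
  have hdeg : f.natDegree = s.card - 1 := by
    rw [hf, Lagrange.natDegree_nodal, Finset.card_erase_of_mem hi₀]
  have hdeglt : f.degree < (s.card : ℕ) := by
    rw [hf, Lagrange.degree_nodal, Finset.card_erase_of_mem hi₀]
    exact_mod_cast Nat.pred_lt hcard.ne'
  have heq := Lagrange.eq_interpolate hvs hdeglt
  have hc := congrArg (fun p => Polynomial.coeff p (s.card - 1)) heq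
  simp only [Lagrange.interpolate_apply, Polynomial.finset_sum_coeff,
    Polynomial.coeff_C_mul] at hc
  have hlhs : f.coeff (s.card - 1) = 1 := by
    rw [← hdeg]; exact hmonic
  rw [hlhs] at hc
  have hterm : ∀ i ∈ s, f.eval (v i) * (Lagrange.basis s v i).coeff (s.card - 1) =
      (∏ j ∈ s.erase i₀, (v i - y j)) / (∏ j ∈ s.erase i, (v i - v j)) := by
    intro i hi
    have hb : (Lagrange.basis s v i).coeff (s.card - 1) =
        ∏ j ∈ s.erase i, (v i - v j)⁻¹ := by
      rw [← leadingCoeff_lagrange_basis s v hvs i hi]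
      unfold Polynomial.leadingCoeff
      rw [Lagrange.natDegree_basis hvs hi]
    rw [hb, hf, Lagrange.eval_nodal, div_eq_mul_inv, ← Finset.prod_inv_distrib]
  rw [← Finset.sum_congr rfl hterm]
  exact hc.symm

end SP13
namespace SP13
open StrictPartition Finset

variable (lam : StrictPartition)

lemma part_zero : lam.part 0 = lam.part 1 := rfl

lemma part_getElem (m : ℕ) (hm : m < lam.parts.length) : lam.parts[m] = lam.part (m + 1) := by
  unfold StrictPartition.part
  simp only [Nat.add_sub_cancel]
  rw [List.getD_eq_getElem _ _ hm]

lemma sum_getD (l : List ℕ) : ∀ L, l.length ≤ L → ∑ i ∈ Finset.range L, l.getD i 0 = l.sum := by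
  induction l with
  | nil => intro L _; simp
  | cons a t ih =>
    intro L hL
    match L, hL with
    | (M+1), hL =>
      rw [Finset.sum_range_succ']
      simp only [List.getD_cons_succ, List.getD_cons_zero, List.sum_cons]
      rw [ih M (by simpa using hL)]
      omega

lemma size_eq_sum (L : ℕ) (hL : lam.length ≤ L) :
    lam.size = ∑ i ∈ Finset.Icc 1 L, lam.part i := by
  have h1 : Finset.Icc 1 L = Finset.Ico 1 (L + 1) := by
    ext x; simp [Finset.mem_Icc, Finset.mem_Ico]
  rw [h1, Finset.sum_Ico_eq_sum_range]
  simp only [Nat.add_sub_cancel]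
  have h2 : ∀ i, lam.part (1 + i) = lam.parts.getD i 0 := by
    intro i
    unfold StrictPartition.part
    congr 1
    omega
  rw [Finset.sum_congr rfl (fun i _ => h2 i), sum_getD lam.parts L hL]
  rfl

lemma length_le_of_le (mu nu : StrictPartition) (h : ∀ i, 1 ≤ i → mu.part i ≤ nu.part i) :
    mu.length ≤ nu.length := by
  rcases Nat.eq_zero_or_pos mu.length with h0 | h0
  · omega
  by_contra hc
  have h1 := part_pos mu mu.length (by omega) (le_refl _)
  have h2 := part_eq_zero nu mu.length (by omega)
  have := h mu.length (by omega)
  omega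

lemma sp_ext (mu nu : StrictPartition) (h : ∀ i, 1 ≤ i → mu.part i = nu.part i) : mu = nu := by
  have hlen : mu.length = nu.length :=
    le_antisymm (length_le_of_le mu nu (fun i hi => (h i hi).le))
      (length_le_of_le nu mu (fun i hi => (h i hi).ge))
  have hparts : mu.parts = nu.parts := by
    apply List.ext_getElem (by exact hlen)
    intro i h1 h2
    have := h (i + 1) (by omega)
    rw [← part_getElem mu i h1, ← part_getElem nu i h2] at this
    exact this
  cases mu; cases nu
  simp only at hparts
  subst hparts
  rfl

/-- Parts list with part `r` incremented. -/
def nuR (r : ℕ) (hr1 : 1 ≤ r) (hrℓ : r ≤ lam.length)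
    (hadd : r = 1 ∨ lam.part r + 1 < lam.part (r - 1)) : StrictPartition where
  parts := lam.parts.set (r - 1) (lam.part r + 1)
  pos := by
    intro p hp
    rcases List.mem_or_eq_of_mem_set hp with h | h
    · exact lam.pos p h
    · omega
  sorted := by
    rw [List.pairwise_iff_getElem]
    intro i j hi hj hij
    have hlen : (lam.parts.set (r - 1) (lam.part r + 1)).length = lam.parts.length := by simp
    rw [hlen] at hi hj
    have hℓ : lam.parts.length = lam.length := rfl
    rw [List.getElem_set, List.getElem_set]
    split_ifs with h1 h2 h2
    · omega
    · rw [part_getElem lam j hj]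
      have := part_lt_part lam r (j + 1) hr1 (by omega) (by omega)
      omega
    · rw [part_getElem lam i hi]
      rcases hadd with h | h
      · omega
      · have := part_staircase lam (i + 1) (r - 1) (by omega) (by omega) (by omega)
        omega
    · rw [part_getElem lam i hi, part_getElem lam j hj]
      exact part_lt_part lam (i + 1) (j + 1) (by omega) (by omega) (by omega)

lemma nuR_part (r : ℕ) (hr1 : 1 ≤ r) (hrℓ : r ≤ lam.length)
    (hadd : r = 1 ∨ lam.part r + 1 < lam.part (r - 1)) (i : ℕ) (hi : 1 ≤ i) :
    (nuR lam r hr1 hrℓ hadd).part i = if i = r then lam.part r + 1 else lam.part i := by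
  have hℓ : lam.parts.length = lam.length := rfl
  show (lam.parts.set (r - 1) (lam.part r + 1)).getD (i - 1) 0 = _
  by_cases h : i - 1 < lam.parts.length
  · rw [List.getD_eq_getElem _ _ (by simpa using h), List.getElem_set]
    by_cases h2 : i = r
    · rw [if_pos (by omega : r - 1 = i - 1), if_pos h2]
    · rw [if_neg (by omega : ¬ r - 1 = i - 1), if_neg h2, part_getElem lam (i - 1) h,
        show i - 1 + 1 = i by omega]
  · rw [List.getD_eq_default _ _ (by simpa using (by omega : lam.parts.length ≤ i - 1))]
    rw [if_neg (by omega), part_eq_zero lam i (by omega)]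

lemma nuR_length (r : ℕ) (hr1 : 1 ≤ r) (hrℓ : r ≤ lam.length)
    (hadd : r = 1 ∨ lam.part r + 1 < lam.part (r - 1)) :
    (nuR lam r hr1 hrℓ hadd).length = lam.length := by
  unfold nuR StrictPartition.length
  simp

lemma nuR_size (r : ℕ) (hr1 : 1 ≤ r) (hrℓ : r ≤ lam.length)
    (hadd : r = 1 ∨ lam.part r + 1 < lam.part (r - 1)) :
    (nuR lam r hr1 hrℓ hadd).size = lam.size + 1 := by
  rw [size_eq_sum (nuR lam r hr1 hrℓ hadd) lam.length (by rw [nuR_length]),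
    size_eq_sum lam lam.length (le_refl _)]
  have h1 : ∀ i ∈ Finset.Icc 1 lam.length,
      (nuR lam r hr1 hrℓ hadd).part i = lam.part i + if i = r then 1 else 0 := by
    intro i hi
    simp only [Finset.mem_Icc] at hi
    rw [nuR_part lam r hr1 hrℓ hadd i hi.1]
    by_cases h : i = r
    · simp [h]
    · simp [h]
  rw [Finset.sum_congr rfl h1, Finset.sum_add_distrib, Finset.sum_ite_eq' (Finset.Icc 1 lam.length)]
  rw [if_pos (by simp [Finset.mem_Icc]; omega)]

lemma nuR_addbox (r : ℕ) (hr1 : 1 ≤ r) (hrℓ : r ≤ lam.length)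
    (hadd : r = 1 ∨ lam.part r + 1 < lam.part (r - 1)) :
    lam.AddBox (nuR lam r hr1 hrℓ hadd) := by
  constructor
  · intro i
    rcases Nat.eq_zero_or_pos i with h0 | h0
    · subst h0
      rw [part_zero, part_zero, nuR_part lam r hr1 hrℓ hadd 1 (le_refl _)]
      by_cases h : 1 = r
      · rw [if_pos h]; subst h; omega
      · rw [if_neg h]
    · rw [nuR_part lam r hr1 hrℓ hadd i h0]
      by_cases h : i = r
      · rw [if_pos h]; subst h; omega
      · rw [if_neg h]
  · exact nuR_size lam r hr1 hrℓ hadd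

/-- Parts list with a new part 1 appended. -/
def nu0 (hadd : lam.length = 0 ∨ 2 ≤ lam.part lam.length) : StrictPartition where
  parts := lam.parts ++ [1]
  pos := by
    intro p hp
    rcases List.mem_append.mp hp with h | h
    · exact lam.pos p h
    · simp at h; omega
  sorted := by
    rw [List.pairwise_append]
    refine ⟨lam.sorted, by simp, ?_⟩
    intro x hx y hy
    simp only [List.mem_singleton] at hy
    subst hy
    obtain ⟨i, hi, rfl⟩ := List.mem_iff_getElem.mp hx
    have hℓ : lam.parts.length = lam.length := rfl
    rw [part_getElem lam i hi]
    have := part_staircase lam (i + 1) lam.length (by omega) (by omega) (le_refl _)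
    rcases hadd with h | h
    · omega
    · omega

lemma nu0_part (hadd : lam.length = 0 ∨ 2 ≤ lam.part lam.length) (i : ℕ) (hi : 1 ≤ i) :
    (nu0 lam hadd).part i = if i = lam.length + 1 then 1 else lam.part i := by
  unfold nu0 StrictPartition.part
  simp only
  have hℓ : lam.parts.length = lam.length := rfl
  by_cases h : i - 1 < lam.parts.length
  · rw [List.getD_eq_getElem _ _ (by simp; omega), List.getElem_append_left h,
      ← List.getD_eq_getElem _ _ h, if_neg (by omega)]
  · by_cases h2 : i = lam.length + 1
    · rw [if_pos h2]
      rw [List.getD_eq_getElem _ _ (by simp; omega)]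
      rw [List.getElem_append_right (by omega)]
      simp [h2, hℓ]
    · rw [if_neg h2, List.getD_eq_default _ _ (by simp; omega),
        List.getD_eq_default _ _ (by omega)]

lemma nu0_length (hadd : lam.length = 0 ∨ 2 ≤ lam.part lam.length) :
    (nu0 lam hadd).length = lam.length + 1 := by
  unfold nu0 StrictPartition.length
  simp

lemma nu0_size (hadd : lam.length = 0 ∨ 2 ≤ lam.part lam.length) :
    (nu0 lam hadd).size = lam.size + 1 := by
  unfold nu0 StrictPartition.size
  simp [StrictPartition.size]

lemma nu0_addbox (hadd : lam.length = 0 ∨ 2 ≤ lam.part lam.length) :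
    lam.AddBox (nu0 lam hadd) := by
  constructor
  · intro i
    rcases Nat.eq_zero_or_pos i with h0 | h0
    · subst h0
      rw [part_zero, part_zero, nu0_part lam hadd 1 (le_refl _)]
      rcases Nat.eq_zero_or_pos lam.length with hl | hl
      · rw [if_pos (by omega), part_eq_zero lam 1 (by omega)]
        omega
      · rw [if_neg (by omega)]
    · rw [nu0_part lam hadd i h0]
      by_cases h : i = lam.length + 1
      · rw [if_pos h, part_eq_zero lam i (by omega)]
        omega
      · rw [if_neg h]
  · exact nu0_size lam hadd

theorem addbox_classify (nu : StrictPartition) (h : lam.AddBox nu) :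
    (nu.length = lam.length ∧ ∃ r, 1 ≤ r ∧ r ≤ lam.length ∧
        (r = 1 ∨ lam.part r + 1 < lam.part (r - 1)) ∧
        (∀ i, 1 ≤ i → nu.part i = if i = r then lam.part r + 1 else lam.part i)) ∨
    (nu.length = lam.length + 1 ∧ (lam.length = 0 ∨ 2 ≤ lam.part lam.length) ∧
        (∀ i, 1 ≤ i → nu.part i = if i = lam.length + 1 then 1 else lam.part i)) := by
  obtain ⟨hle, hsize⟩ := h
  set L := nu.length with hL
  have hℓL : lam.length ≤ L := length_le_of_le lam nu (fun i _ => hle i)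
  have hsum : ∑ i ∈ Finset.Icc 1 L, nu.part i = (∑ i ∈ Finset.Icc 1 L, lam.part i) + 1 := by
    rw [← size_eq_sum nu L (le_refl _), ← size_eq_sum lam L hℓL, hsize]
  -- find the bumped index
  have hex : ∃ r ∈ Finset.Icc 1 L, lam.part r < nu.part r := by
    by_contra hc
    push_neg at hc
    have : ∑ i ∈ Finset.Icc 1 L, nu.part i ≤ ∑ i ∈ Finset.Icc 1 L, lam.part i :=
      Finset.sum_le_sum hc
    omega
  obtain ⟨r, hrmem, hrlt⟩ := hex
  have hall : ∀ i ∈ Finset.Icc 1 L,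
      (lam.part i + if i = r then 1 else 0) = nu.part i := by
    rw [← Finset.sum_eq_sum_iff_of_le]
    · rw [Finset.sum_add_distrib, Finset.sum_ite_eq' (Finset.Icc 1 L), if_pos hrmem, hsum]
    · intro i hi
      by_cases h : i = r
      · subst h; simp; omega
      · simp [h]; exact hle i
  simp only [Finset.mem_Icc] at hrmem
  have hpart : ∀ i, 1 ≤ i → nu.part i = if i = r then lam.part r + 1 else lam.part i := by
    intro i hi
    by_cases hiL : i ≤ L
    · have := hall i (by simp [Finset.mem_Icc]; omega)
      by_cases h : i = r
      · subst h; simp at this ⊢; omega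
      · simp [h] at this ⊢; omega
    · rw [part_eq_zero nu i (by omega), if_neg (by omega), part_eq_zero lam i (by omega)]
  rcases Nat.lt_or_ge lam.length L with hlt | hge
  · -- new row case
    right
    have hrgt : lam.length < r := by
      by_contra hc
      have h1 := part_pos nu (lam.length + 1) (by omega) (by omega)
      have h2 := hpart (lam.length + 1) (by omega)
      rw [if_neg (by omega), part_eq_zero lam (lam.length + 1) (by omega)] at h2
      omega
    have hr1 : r = lam.length + 1 := by
      by_contra hc
      have h1 := part_pos nu (lam.length + 1) (by omega) (by omega)
      have h2 := hpart (lam.length + 1) (by omega)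
      rw [if_neg (by omega), part_eq_zero lam (lam.length + 1) (by omega)] at h2
      omega
    have hL1 : L = lam.length + 1 := by
      by_contra hc
      have h1 := part_pos nu (lam.length + 2) (by omega) (by omega)
      have h2 := hpart (lam.length + 2) (by omega)
      rw [if_neg (by omega), part_eq_zero lam (lam.length + 2) (by omega)] at h2
      omega
    subst hr1
    refine ⟨hL1, ?_, ?_⟩
    · rcases Nat.eq_zero_or_pos lam.length with h0 | h0
      · left; exact h0
      · right
        have h1 := part_lt_part nu lam.length (lam.length + 1) (by omega) (by omega) (by omega)
        have h2 := hpart lam.length (by omega)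
        have h3 := hpart (lam.length + 1) (by omega)
        rw [if_neg (by omega)] at h2
        rw [if_pos rfl, part_eq_zero lam (lam.length + 1) (by omega)] at h3
        omega
    · intro i hi
      have h4 := hpart i hi
      rw [h4]
      by_cases h : i = lam.length + 1
      · rw [if_pos h, if_pos h, part_eq_zero lam (lam.length + 1) (by omega)]
      · rw [if_neg h, if_neg h]
  · -- same length case
    left
    have hLeq : L = lam.length := by omega
    refine ⟨hLeq, r, hrmem.1, by omega, ?_, hpart⟩
    by_cases hr1 : r = 1
    · left; exact hr1
    · right
      have h1 := part_lt_part nu (r - 1) r (by omega) (by omega) (by omega)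
      have h2 := hpart (r - 1) (by omega)
      have h3 := hpart r (by omega)
      rw [if_neg (by omega)] at h2
      rw [if_pos rfl] at h3
      omega

end SP13
namespace SP13
open StrictPartition Finset

variable (lam : StrictPartition)

/-- Numerator of the closed formula for `H`, in `ℚ`. -/
noncomputable def Pn (mu : StrictPartition) : ℚ :=
  (∏ i ∈ Finset.Icc 1 mu.length, (Nat.factorial (mu.part i) : ℚ)) *
    ∏ i ∈ Finset.Icc 1 mu.length, ∏ k ∈ Finset.Ioc i mu.length,
      ((mu.part i : ℚ) + mu.part k)

/-- Denominator of the closed formula for `H`, in `ℚ`. -/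
noncomputable def Pd (mu : StrictPartition) : ℚ :=
  ∏ i ∈ Finset.Icc 1 mu.length, ∏ k ∈ Finset.Ioc i mu.length,
    ((mu.part i : ℚ) - mu.part k)

lemma H_eq_Q (mu : StrictPartition) : (mu.H : ℚ) * Pd mu = Pn mu := by
  have h := H_formula mu
  have hcast := congrArg (fun n : ℕ => (n : ℚ)) h
  push_cast at hcast
  unfold Pn Pd
  rw [← hcast]
  congr 1
  apply Finset.prod_congr rfl
  intro i hi
  apply Finset.prod_congr rfl
  intro k hk
  simp only [Finset.mem_Icc] at hi
  simp only [Finset.mem_Ioc] at hk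
  have := part_lt_part mu i k hi.1 hk.1 hk.2
  push_cast [Nat.cast_sub this.le]
  ring

lemma Pd_ne_zero (mu : StrictPartition) : Pd mu ≠ 0 := by
  unfold Pd
  rw [Finset.prod_ne_zero_iff]
  intro i hi
  rw [Finset.prod_ne_zero_iff]
  intro k hk
  simp only [Finset.mem_Icc] at hi
  simp only [Finset.mem_Ioc] at hk
  have := part_lt_part mu i k hi.1 hk.1 hk.2
  have : (mu.part k : ℚ) < mu.part i := by exact_mod_cast this
  intro hc
  have : (mu.part i : ℚ) = mu.part k := by linarith [hc]
  linarith

lemma H_pos (mu : StrictPartition) : 0 < mu.H := by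
  unfold StrictPartition.H
  apply Finset.prod_pos
  intro b _
  unfold StrictPartition.hook
  omega

lemma H_ne_zero_Q (mu : StrictPartition) : (mu.H : ℚ) ≠ 0 := by
  have := H_pos mu
  positivity

lemma Pn_ne_zero (mu : StrictPartition) : Pn mu ≠ 0 := by
  rw [← H_eq_Q mu]
  exact mul_ne_zero (H_ne_zero_Q mu) (Pd_ne_zero mu)

lemma double_split (f : ℕ → ℕ → ℚ) (ℓ r : ℕ) (hr1 : 1 ≤ r) (hrℓ : r ≤ ℓ) :
    ∏ i ∈ Finset.Icc 1 ℓ, ∏ k ∈ Finset.Ioc i ℓ, f i k =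
      ((∏ k ∈ Finset.Ioc r ℓ, f r k) * ∏ i ∈ Finset.Ico 1 r, f i r) *
        ∏ i ∈ (Finset.Icc 1 ℓ).erase r, ∏ k ∈ (Finset.Ioc i ℓ).erase r, f i k := by
  rw [← Finset.mul_prod_erase _ _ (show r ∈ Finset.Icc 1 ℓ by simp [Finset.mem_Icc]; omega)]
  have hinner : ∀ i ∈ (Finset.Icc 1 ℓ).erase r, (∏ k ∈ Finset.Ioc i ℓ, f i k) =
      (if i < r then f i r else 1) * ∏ k ∈ (Finset.Ioc i ℓ).erase r, f i k := by
    intro i hi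
    simp only [Finset.mem_erase, Finset.mem_Icc] at hi
    by_cases h : i < r
    · rw [if_pos h, Finset.mul_prod_erase _ _ (show r ∈ Finset.Ioc i ℓ by
        simp [Finset.mem_Ioc]; omega)]
    · rw [if_neg h, one_mul, Finset.erase_eq_of_notMem (by simp [Finset.mem_Ioc]; omega)]
  rw [Finset.prod_congr rfl hinner, Finset.prod_mul_distrib]
  have h2 : (∏ i ∈ (Finset.Icc 1 ℓ).erase r, if i < r then f i r else 1) =
      ∏ i ∈ Finset.Ico 1 r, f i r := by
    rw [← Finset.prod_filter]
    apply Finset.prod_congr _ (fun x _ => rfl)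
    ext x
    simp only [Finset.mem_filter, Finset.mem_erase, Finset.mem_Icc, Finset.mem_Ico]
    omega
  rw [h2]
  ring

lemma erase_split (f : ℕ → ℚ) (ℓ r : ℕ) (hr1 : 1 ≤ r) (hrℓ : r ≤ ℓ) :
    ∏ j ∈ (Finset.Icc 1 ℓ).erase r, f j =
      (∏ j ∈ Finset.Ico 1 r, f j) * ∏ j ∈ Finset.Ioc r ℓ, f j := by
  rw [← Finset.prod_union (by
    apply Finset.disjoint_left.mpr
    intro x hx hy
    simp only [Finset.mem_Ico] at hx
    simp only [Finset.mem_Ioc] at hy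
    omega)]
  apply Finset.prod_congr _ (fun x _ => rfl)
  ext x
  simp only [Finset.mem_erase, Finset.mem_Icc, Finset.mem_union, Finset.mem_Ico, Finset.mem_Ioc]
  omega

end SP13
namespace SP13
open StrictPartition Finset

variable (lam : StrictPartition)

/-- Lagrange node values: contents-squared data `x_i` (with `x_0 = 0`). -/
noncomputable def vnode (j : ℕ) : ℚ :=
  if j = 0 then 0 else (lam.part j : ℚ) * ((lam.part j : ℚ) + 1) / 2

/-- Lagrange target values `y_j`. -/
noncomputable def ynode (j : ℕ) : ℚ :=
  (lam.part j : ℚ) * ((lam.part j : ℚ) - 1) / 2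

lemma quad_lt (x y : ℕ) (h : x < y) : (x : ℚ) * ((x : ℚ) + 1) / 2 < (y : ℚ) * ((y : ℚ) + 1) / 2 := by
  have h1 : (x : ℚ) < y := by exact_mod_cast h
  have h2 : (0 : ℚ) ≤ x := Nat.cast_nonneg x
  nlinarith

lemma vnode_injOn : Set.InjOn (vnode lam) ↑(insert 0 (Finset.Icc 1 lam.length)) := by
  intro a ha b hb h
  simp only [Finset.coe_insert, Set.mem_insert_iff, Finset.mem_coe, Finset.mem_Icc] at ha hb
  by_contra hne
  have hkey : ∀ x y : ℕ, (1 ≤ x ∧ x ≤ lam.length) → (1 ≤ y ∧ y ≤ lam.length) → x < y →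
      vnode lam y < vnode lam x := by
    intro x y hx hy hxy
    unfold vnode
    rw [if_neg (by omega), if_neg (by omega)]
    exact quad_lt _ _ (part_lt_part lam x y hx.1 hxy hy.2)
  have hpos : ∀ x : ℕ, (1 ≤ x ∧ x ≤ lam.length) → 0 < vnode lam x := by
    intro x hx
    unfold vnode
    rw [if_neg (by omega)]
    have := part_pos lam x hx.1 hx.2
    have := quad_lt 0 (lam.part x) this
    simpa using this
  have hv0 : vnode lam 0 = 0 := by unfold vnode; simp
  rcases ha with rfl | ha
  · rcases hb with rfl | hb
    · exact hne rfl
    · have := hpos b hb; rw [← h, hv0] at this; exact absurd this (lt_irrefl 0)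
  · rcases hb with rfl | hb
    · have := hpos a ha; rw [h, hv0] at this; exact absurd this (lt_irrefl 0)
    · rcases Nat.lt_trichotomy a b with hab | hab | hab
      · have := hkey a b ha hb hab
        linarith
      · exact hne hab
      · have := hkey b a hb ha hab
        linarith

lemma lag_sum :
    ∑ i ∈ insert 0 (Finset.Icc 1 lam.length),
      (∏ j ∈ Finset.Icc 1 lam.length, (vnode lam i - ynode lam j)) /
        (∏ j ∈ (insert 0 (Finset.Icc 1 lam.length)).erase i, (vnode lam i - vnode lam j)) = 1 := by
  have h0 : (0 : ℕ) ∉ Finset.Icc 1 lam.length := by simp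
  have := lagrange_identity (insert 0 (Finset.Icc 1 lam.length)) (vnode lam) (ynode lam)
    (vnode_injOn lam) 0 (Finset.mem_insert_self _ _)
  rwa [Finset.erase_insert h0] at this

end SP13
namespace SP13
open StrictPartition Finset

variable (lam : StrictPartition)

lemma Tr_zero (r : ℕ) (hr2 : 2 ≤ r) (hrℓ : r ≤ lam.length)
    (hne : lam.part (r - 1) = lam.part r + 1) :
    ∏ j ∈ Finset.Icc 1 lam.length, (vnode lam r - ynode lam j) = 0 := by
  apply Finset.prod_eq_zero (show r - 1 ∈ Finset.Icc 1 lam.length by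
    simp [Finset.mem_Icc]; omega)
  unfold vnode ynode
  rw [if_neg (by omega), hne]
  push_cast
  ring

lemma T0_zero (hℓ : 1 ≤ lam.length) (h1 : lam.part lam.length = 1) :
    ∏ j ∈ Finset.Icc 1 lam.length, (vnode lam 0 - ynode lam j) = 0 := by
  apply Finset.prod_eq_zero (show lam.length ∈ Finset.Icc 1 lam.length by
    simp [Finset.mem_Icc]; omega)
  unfold vnode ynode
  rw [if_pos rfl, h1]
  norm_num

lemma Tr_eq (r : ℕ) (hr1 : 1 ≤ r) (hrℓ : r ≤ lam.length)
    (hadd : r = 1 ∨ lam.part r + 1 < lam.part (r - 1)) :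
    (∏ j ∈ Finset.Icc 1 lam.length, (vnode lam r - ynode lam j)) /
      (∏ j ∈ (insert 0 (Finset.Icc 1 lam.length)).erase r, (vnode lam r - vnode lam j)) =
    2 * (lam.H : ℚ) / ((nuR lam r hr1 hrℓ hadd).H : ℚ) := by
  set ℓ := lam.length with hℓdef
  set ν := nuR lam r hr1 hrℓ hadd with hνdef
  have hνlen : ν.length = ℓ := nuR_length lam r hr1 hrℓ hadd
  have hνp : ∀ i, 1 ≤ i → i ≠ r → (ν.part i : ℚ) = (lam.part i : ℚ) := by
    intro i h1 h2
    rw [nuR_part lam r hr1 hrℓ hadd i h1, if_neg h2]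
  have hνr : (ν.part r : ℚ) = (lam.part r : ℚ) + 1 := by
    rw [nuR_part lam r hr1 hrℓ hadd r hr1, if_pos rfl]
    push_cast; ring
  have hrIcc : r ∈ Finset.Icc 1 ℓ := by simp [Finset.mem_Icc]; omega
  -- named product pieces
  set C1 : ℚ := ∏ i ∈ (Finset.Icc 1 ℓ).erase r, (Nat.factorial (lam.part i) : ℚ) with hC1
  set C2 : ℚ := ∏ i ∈ (Finset.Icc 1 ℓ).erase r, ∏ k ∈ (Finset.Ioc i ℓ).erase r,
    ((lam.part i : ℚ) + lam.part k) with hC2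
  set C3 : ℚ := ∏ i ∈ (Finset.Icc 1 ℓ).erase r, ∏ k ∈ (Finset.Ioc i ℓ).erase r,
    ((lam.part i : ℚ) - lam.part k) with hC3
  set SL : ℚ := ∏ k ∈ Finset.Ioc r ℓ, ((lam.part r : ℚ) + lam.part k) with hSL
  set TL : ℚ := ∏ i ∈ Finset.Ico 1 r, ((lam.part i : ℚ) + lam.part r) with hTL
  set SL' : ℚ := ∏ k ∈ Finset.Ioc r ℓ, ((lam.part r : ℚ) - lam.part k) with hSL'
  set TL' : ℚ := ∏ i ∈ Finset.Ico 1 r, ((lam.part i : ℚ) - lam.part r) with hTL'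
  set SN : ℚ := ∏ k ∈ Finset.Ioc r ℓ, (((lam.part r : ℚ) + 1) + lam.part k) with hSN
  set TN : ℚ := ∏ i ∈ Finset.Ico 1 r, ((lam.part i : ℚ) + ((lam.part r : ℚ) + 1)) with hTN
  set SN' : ℚ := ∏ k ∈ Finset.Ioc r ℓ, (((lam.part r : ℚ) + 1) - lam.part k) with hSN'
  set TN' : ℚ := ∏ i ∈ Finset.Ico 1 r, ((lam.part i : ℚ) - ((lam.part r : ℚ) + 1)) with hTN'
  set NO : ℚ := ∏ k ∈ Finset.Ioc r ℓ, (vnode lam r - ynode lam k) with hNO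
  set NI : ℚ := ∏ i ∈ Finset.Ico 1 r, (vnode lam r - ynode lam i) with hNI
  set DO : ℚ := ∏ k ∈ Finset.Ioc r ℓ, (vnode lam r - vnode lam k) with hDO
  set DI : ℚ := ∏ i ∈ Finset.Ico 1 r, (vnode lam r - vnode lam i) with hDI
  -- decomposition of Pn lam
  have hPnl : Pn lam = ((Nat.factorial (lam.part r) : ℚ) * C1) * ((SL * TL) * C2) := by
    unfold Pn
    rw [← Finset.mul_prod_erase _ _ hrIcc,
      double_split (fun i k => ((lam.part i : ℚ) + lam.part k)) ℓ r hr1 hrℓ]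
  have hPdl : Pd lam = (SL' * TL') * C3 := by
    unfold Pd
    rw [double_split (fun i k => ((lam.part i : ℚ) - lam.part k)) ℓ r hr1 hrℓ]
  -- decomposition of Pn ν
  have hC1ν : ∀ i ∈ (Finset.Icc 1 ℓ).erase r,
      (Nat.factorial (ν.part i) : ℚ) = (Nat.factorial (lam.part i) : ℚ) := by
    intro i hi
    simp only [Finset.mem_erase, Finset.mem_Icc] at hi
    rw [nuR_part lam r hr1 hrℓ hadd i hi.2.1, if_neg hi.1]
  have hPnν : Pn ν = (((lam.part r : ℚ) + 1) * (Nat.factorial (lam.part r) : ℚ) * C1) *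
      ((SN * TN) * C2) := by
    unfold Pn
    rw [hνlen]
    rw [← Finset.mul_prod_erase _ _ hrIcc,
      double_split (fun i k => ((ν.part i : ℚ) + ν.part k)) ℓ r hr1 hrℓ]
    rw [Finset.prod_congr rfl hC1ν]
    have e1 : (∏ k ∈ Finset.Ioc r ℓ, ((ν.part r : ℚ) + ν.part k)) = SN := by
      apply Finset.prod_congr rfl
      intro k hk
      simp only [Finset.mem_Ioc] at hk
      rw [hνr, hνp k (by omega) (by omega)]
    have e2 : (∏ i ∈ Finset.Ico 1 r, ((ν.part i : ℚ) + ν.part r)) = TN := by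
      apply Finset.prod_congr rfl
      intro i hi
      simp only [Finset.mem_Ico] at hi
      rw [hνr, hνp i (by omega) (by omega)]
    have e3 : (∏ i ∈ (Finset.Icc 1 ℓ).erase r, ∏ k ∈ (Finset.Ioc i ℓ).erase r,
        ((ν.part i : ℚ) + ν.part k)) = C2 := by
      apply Finset.prod_congr rfl
      intro i hi
      simp only [Finset.mem_erase, Finset.mem_Icc] at hi
      apply Finset.prod_congr rfl
      intro k hk
      simp only [Finset.mem_erase, Finset.mem_Ioc] at hk
      rw [hνp i hi.2.1 hi.1, hνp k (by omega) hk.1]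
    rw [e1, e2, e3]
    have e4 : (Nat.factorial (ν.part r) : ℚ) =
        ((lam.part r : ℚ) + 1) * (Nat.factorial (lam.part r) : ℚ) := by
      rw [nuR_part lam r hr1 hrℓ hadd r hr1, if_pos rfl, Nat.factorial_succ]
      push_cast; ring
    rw [e4]
  have hPdν : Pd ν = (SN' * TN') * C3 := by
    unfold Pd
    rw [hνlen]
    rw [double_split (fun i k => ((ν.part i : ℚ) - ν.part k)) ℓ r hr1 hrℓ]
    have e1 : (∏ k ∈ Finset.Ioc r ℓ, ((ν.part r : ℚ) - ν.part k)) = SN' := by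
      apply Finset.prod_congr rfl
      intro k hk
      simp only [Finset.mem_Ioc] at hk
      rw [hνr, hνp k (by omega) (by omega)]
    have e2 : (∏ i ∈ Finset.Ico 1 r, ((ν.part i : ℚ) - ν.part r)) = TN' := by
      apply Finset.prod_congr rfl
      intro i hi
      simp only [Finset.mem_Ico] at hi
      rw [hνr, hνp i (by omega) (by omega)]
    have e3 : (∏ i ∈ (Finset.Icc 1 ℓ).erase r, ∏ k ∈ (Finset.Ioc i ℓ).erase r,
        ((ν.part i : ℚ) - ν.part k)) = C3 := by
      apply Finset.prod_congr rfl
      intro i hi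
      simp only [Finset.mem_erase, Finset.mem_Icc] at hi
      apply Finset.prod_congr rfl
      intro k hk
      simp only [Finset.mem_erase, Finset.mem_Ioc] at hk
      rw [hνp i hi.2.1 hi.1, hνp k (by omega) hk.1]
    rw [e1, e2, e3]
  -- numerator and denominator decompositions
  have hNum : (∏ j ∈ Finset.Icc 1 ℓ, (vnode lam r - ynode lam j)) =
      (vnode lam r - ynode lam r) * (NI * NO) := by
    rw [← Finset.mul_prod_erase _ _ hrIcc,
      erase_split (fun j => vnode lam r - ynode lam j) ℓ r hr1 hrℓ]
  have hDen : (∏ j ∈ (insert 0 (Finset.Icc 1 ℓ)).erase r, (vnode lam r - vnode lam j)) =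
      vnode lam r * (DI * DO) := by
    rw [Finset.erase_insert_of_ne (by omega : (0:ℕ) ≠ r),
      Finset.prod_insert (by simp), erase_split (fun j => vnode lam r - vnode lam j) ℓ r hr1 hrℓ]
    have : vnode lam 0 = 0 := by unfold vnode; simp
    rw [this, sub_zero]
  -- per-factor identities
  have hC_Ioc : NO * SN * SL' = DO * SL * SN' := by
    rw [hNO, hSN, hSL', hDO, hSL, hSN', ← Finset.prod_mul_distrib, ← Finset.prod_mul_distrib,
      ← Finset.prod_mul_distrib, ← Finset.prod_mul_distrib]
    apply Finset.prod_congr rfl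
    intro k hk
    simp only [Finset.mem_Ioc] at hk
    unfold vnode ynode
    rw [if_neg (by omega), if_neg (by omega)]
    ring
  have hC_Ico : NI * TN * TL' = DI * TL * TN' := by
    rw [hNI, hTN, hTL', hDI, hTL, hTN', ← Finset.prod_mul_distrib, ← Finset.prod_mul_distrib,
      ← Finset.prod_mul_distrib, ← Finset.prod_mul_distrib]
    apply Finset.prod_congr rfl
    intro i hi
    simp only [Finset.mem_Ico] at hi
    unfold vnode ynode
    rw [if_neg (by omega), if_neg (by omega)]
    ring
  -- scalar identity
  have hs : (vnode lam r - ynode lam r) * ((lam.part r : ℚ) + 1) = 2 * vnode lam r := by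
    unfold vnode ynode
    rw [if_neg (by omega)]
    ring
  -- nonzeroness
  have hvr_pos : 0 < vnode lam r := by
    unfold vnode
    rw [if_neg (by omega)]
    have := part_pos lam r hr1 hrℓ
    have := quad_lt 0 (lam.part r) this
    simpa using this
  have hDI_ne : DI ≠ 0 := by
    rw [hDI, Finset.prod_ne_zero_iff]
    intro i hi
    simp only [Finset.mem_Ico] at hi
    have hlt := part_lt_part lam i r hi.1 hi.2 hrℓ
    have := quad_lt (lam.part r) (lam.part i) hlt
    unfold vnode
    rw [if_neg (by omega), if_neg (by omega)]
    intro hc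
    rw [sub_eq_zero] at hc
    linarith
  have hDO_ne : DO ≠ 0 := by
    rw [hDO, Finset.prod_ne_zero_iff]
    intro k hk
    simp only [Finset.mem_Ioc] at hk
    have hlt := part_lt_part lam r k hr1 hk.1 hk.2
    have := quad_lt (lam.part k) (lam.part r) hlt
    unfold vnode
    rw [if_neg (by omega), if_neg (by omega)]
    intro hc
    rw [sub_eq_zero] at hc
    linarith
  have hDen_ne : vnode lam r * (DI * DO) ≠ 0 :=
    mul_ne_zero (ne_of_gt hvr_pos) (mul_ne_zero hDI_ne hDO_ne)
  -- the key polynomial identity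
  have hHl := H_eq_Q lam
  have hHν := H_eq_Q ν
  have hPdl_ne := Pd_ne_zero lam
  have hPdν_ne := Pd_ne_zero ν
  have hHν_ne := H_ne_zero_Q ν
  have KEY : ((vnode lam r - ynode lam r) * (NI * NO)) * Pn ν * Pd lam =
      2 * Pn lam * (vnode lam r * (DI * DO)) * Pd ν := by
    rw [hPnl, hPdl, hPnν, hPdν]
    linear_combination
      ((Nat.factorial (lam.part r) : ℚ) * C1 * C2 * C3 * (NO * SN * SL') * (NI * TN * TL')) * hs +
      ((Nat.factorial (lam.part r) : ℚ) * C1 * C2 * C3 * (2 * vnode lam r) * (NO * SN * SL')) * hC_Ico +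
      ((Nat.factorial (lam.part r) : ℚ) * C1 * C2 * C3 * (2 * vnode lam r) * (DI * TL * TN')) * hC_Ioc
  -- conclude
  rw [hNum, hDen, div_eq_div_iff hDen_ne hHν_ne]
  apply mul_right_cancel₀ (mul_ne_zero hPdν_ne hPdl_ne)
  linear_combination KEY + (((vnode lam r - ynode lam r) * (NI * NO)) * Pd lam) * hHν -
    (2 * (vnode lam r * (DI * DO)) * Pd ν) * hHl

end SP13
namespace SP13
open StrictPartition Finset

variable (lam : StrictPartition)

lemma T0_eq (hadd : lam.length = 0 ∨ 2 ≤ lam.part lam.length) :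
    (∏ j ∈ Finset.Icc 1 lam.length, (vnode lam 0 - ynode lam j)) /
      (∏ j ∈ (insert 0 (Finset.Icc 1 lam.length)).erase 0, (vnode lam 0 - vnode lam j)) =
    (lam.H : ℚ) / ((nu0 lam hadd).H : ℚ) := by
  set ℓ := lam.length with hℓdef
  set ν := nu0 lam hadd with hνdef
  have hνlen : ν.length = ℓ + 1 := nu0_length lam hadd
  have hνp : ∀ i, 1 ≤ i → i ≤ ℓ → (ν.part i : ℚ) = (lam.part i : ℚ) := by
    intro i h1 h2
    rw [nu0_part lam hadd i h1, if_neg (by omega)]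
  have hνtop : ν.part (ℓ + 1) = 1 := by
    rw [nu0_part lam hadd (ℓ + 1) (by omega), if_pos rfl]
  have hv0 : vnode lam 0 = 0 := by unfold vnode; simp
  have herase : (insert 0 (Finset.Icc 1 ℓ)).erase 0 = Finset.Icc 1 ℓ :=
    Finset.erase_insert (by simp)
  set QP : ℚ := ∏ i ∈ Finset.Icc 1 ℓ, ((lam.part i : ℚ) + 1) with hQP
  set QM : ℚ := ∏ i ∈ Finset.Icc 1 ℓ, ((lam.part i : ℚ) - 1) with hQM
  set N0 : ℚ := ∏ j ∈ Finset.Icc 1 ℓ, (vnode lam 0 - ynode lam j) with hN0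
  set D0 : ℚ := ∏ j ∈ Finset.Icc 1 ℓ, (vnode lam 0 - vnode lam j) with hD0
  have hPnν : Pn ν = Pn lam * QP := by
    unfold Pn
    rw [hνlen]
    rw [Finset.prod_Icc_succ_top (by omega : 1 ≤ ℓ + 1),
      Finset.prod_Icc_succ_top (by omega : 1 ≤ ℓ + 1)]
    rw [hνtop]
    simp only [Nat.factorial_one, Nat.cast_one, mul_one]
    have hfact : (∏ i ∈ Finset.Icc 1 ℓ, (Nat.factorial (ν.part i) : ℚ)) =
        ∏ i ∈ Finset.Icc 1 ℓ, (Nat.factorial (lam.part i) : ℚ) := by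
      apply Finset.prod_congr rfl
      intro i hi
      simp only [Finset.mem_Icc] at hi
      rw [nu0_part lam hadd i hi.1, if_neg (by omega)]
    have htopIoc : Finset.Ioc (ℓ + 1) (ℓ + 1) = ∅ := by simp
    rw [htopIoc, Finset.prod_empty, mul_one, hfact]
    have hinner : ∀ i ∈ Finset.Icc 1 ℓ,
        (∏ k ∈ Finset.Ioc i (ℓ + 1), ((ν.part i : ℚ) + ν.part k)) =
        (∏ k ∈ Finset.Ioc i ℓ, ((lam.part i : ℚ) + lam.part k)) * ((lam.part i : ℚ) + 1) := by
      intro i hi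
      simp only [Finset.mem_Icc] at hi
      rw [Finset.prod_Ioc_succ_top hi.2]
      congr 1
      · apply Finset.prod_congr rfl
        intro k hk
        simp only [Finset.mem_Ioc] at hk
        rw [hνp i hi.1 hi.2, hνp k (by omega) hk.2]
      · rw [hνp i hi.1 hi.2, hνtop]
        norm_num
    rw [Finset.prod_congr rfl hinner, Finset.prod_mul_distrib]
    ring
  have hPdν : Pd ν = Pd lam * QM := by
    unfold Pd
    rw [hνlen]
    rw [Finset.prod_Icc_succ_top (by omega : 1 ≤ ℓ + 1)]
    have htopIoc : Finset.Ioc (ℓ + 1) (ℓ + 1) = ∅ := by simp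
    rw [htopIoc, Finset.prod_empty, mul_one]
    have hinner : ∀ i ∈ Finset.Icc 1 ℓ,
        (∏ k ∈ Finset.Ioc i (ℓ + 1), ((ν.part i : ℚ) - ν.part k)) =
        (∏ k ∈ Finset.Ioc i ℓ, ((lam.part i : ℚ) - lam.part k)) * ((lam.part i : ℚ) - 1) := by
      intro i hi
      simp only [Finset.mem_Icc] at hi
      rw [Finset.prod_Ioc_succ_top hi.2]
      congr 1
      · apply Finset.prod_congr rfl
        intro k hk
        simp only [Finset.mem_Ioc] at hk
        rw [hνp i hi.1 hi.2, hνp k (by omega) hk.2]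
      · rw [hνp i hi.1 hi.2, hνtop]
        norm_num
    rw [Finset.prod_congr rfl hinner, Finset.prod_mul_distrib]
  -- per-factor identity
  have hC : N0 * QP = D0 * QM := by
    rw [hN0, hQP, hD0, hQM, ← Finset.prod_mul_distrib, ← Finset.prod_mul_distrib]
    apply Finset.prod_congr rfl
    intro j hj
    simp only [Finset.mem_Icc] at hj
    unfold vnode ynode
    rw [if_pos rfl, if_neg (by omega)]
    ring
  -- nonzeroness
  have hD0_ne : D0 ≠ 0 := by
    rw [hD0, Finset.prod_ne_zero_iff]
    intro j hj
    simp only [Finset.mem_Icc] at hj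
    have hp := part_pos lam j hj.1 hj.2
    have := quad_lt 0 (lam.part j) hp
    unfold vnode
    rw [if_pos rfl, if_neg (by omega)]
    intro hc
    rw [sub_eq_zero] at hc
    rw [← hc] at this
    norm_num at this
  have hHl := H_eq_Q lam
  have hHν := H_eq_Q ν
  have hPdl_ne := Pd_ne_zero lam
  have hPdν_ne := Pd_ne_zero ν
  have hHν_ne := H_ne_zero_Q ν
  have KEY : N0 * Pn ν * Pd lam = Pn lam * D0 * Pd ν := by
    rw [hPnν, hPdν]
    linear_combination (Pn lam * Pd lam) * hC
  rw [herase, ← hD0, div_eq_div_iff hD0_ne hHν_ne]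
  apply mul_right_cancel₀ (mul_ne_zero hPdν_ne hPdl_ne)
  linear_combination KEY + (N0 * Pd lam) * hHν - (D0 * Pd ν) * hHl

end SP13
namespace SP13
open StrictPartition Finset

variable (lam : StrictPartition)

noncomputable instance : DecidableEq StrictPartition := Classical.decEq _

/-- The set of addable row indices. -/
def Aset : Finset ℕ :=
  (Finset.Icc 1 lam.length).filter (fun r => r = 1 ∨ lam.part r + 1 < lam.part (r - 1))

/-- Total function producing the bumped partitions. -/
noncomputable def Ffun (r : ℕ) : StrictPartition :=
  if h : 1 ≤ r ∧ r ≤ lam.length ∧ (r = 1 ∨ lam.part r + 1 < lam.part (r - 1))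
  then nuR lam r h.1 h.2.1 h.2.2 else lam

lemma Ffun_eq (r : ℕ) (hr1 : 1 ≤ r) (hrℓ : r ≤ lam.length)
    (haddr : r = 1 ∨ lam.part r + 1 < lam.part (r - 1)) :
    Ffun lam r = nuR lam r hr1 hrℓ haddr := dif_pos ⟨hr1, hrℓ, haddr⟩

lemma hS2 : {nu : StrictPartition | lam.AddBox nu ∧ nu.length = lam.length} =
    ↑((Aset lam).image (Ffun lam)) := by
  ext nu
  simp only [Set.mem_setOf_eq, Finset.coe_image, Set.mem_image, Finset.mem_coe,
    Finset.mem_filter, Finset.mem_Icc, Aset]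
  constructor
  · rintro ⟨hab, hlen⟩
    rcases addbox_classify lam nu hab with ⟨_, r, hr1, hrℓ, haddr, hparts⟩ | ⟨hlen', _, _⟩
    · refine ⟨r, ⟨⟨hr1, hrℓ⟩, haddr⟩, ?_⟩
      rw [Ffun_eq lam r hr1 hrℓ haddr]
      apply sp_ext
      intro i hi
      rw [nuR_part lam r hr1 hrℓ haddr i hi, (hparts i hi)]
    · omega
  · rintro ⟨r, ⟨⟨hr1, hrℓ⟩, haddr⟩, rfl⟩
    rw [Ffun_eq lam r hr1 hrℓ haddr]
    exact ⟨nuR_addbox lam r hr1 hrℓ haddr, nuR_length lam r hr1 hrℓ haddr⟩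

lemma Ffun_injOn : Set.InjOn (Ffun lam) ↑(Aset lam) := by
  intro a ha b hb h
  simp only [Finset.mem_coe, Finset.mem_filter, Finset.mem_Icc, Aset] at ha hb
  obtain ⟨⟨ha1, ha2⟩, ha3⟩ := ha
  obtain ⟨⟨hb1, hb2⟩, hb3⟩ := hb
  by_contra hne
  rw [Ffun_eq lam a ha1 ha2 ha3, Ffun_eq lam b hb1 hb2 hb3] at h
  have h1 : (nuR lam a ha1 ha2 ha3).part a = lam.part a + 1 := by
    rw [nuR_part lam a ha1 ha2 ha3 a ha1, if_pos rfl]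
  have h2 : (nuR lam b hb1 hb2 hb3).part a = lam.part a := by
    rw [nuR_part lam b hb1 hb2 hb3 a ha1, if_neg hne]
  rw [h] at h1
  omega

lemma hS1_pos (hadd : lam.length = 0 ∨ 2 ≤ lam.part lam.length) :
    {nu : StrictPartition | lam.AddBox nu ∧ lam.length < nu.length} = {nu0 lam hadd} := by
  ext nu
  simp only [Set.mem_setOf_eq, Set.mem_singleton_iff]
  constructor
  · rintro ⟨hab, hlen⟩
    rcases addbox_classify lam nu hab with ⟨hlen', _⟩ | ⟨_, _, hparts⟩
    · omega
    · apply sp_ext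
      intro i hi
      rw [hparts i hi, nu0_part lam hadd i hi]
  · rintro rfl
    refine ⟨nu0_addbox lam hadd, ?_⟩
    rw [nu0_length lam hadd]
    omega

lemma hS1_neg (hadd : ¬ (lam.length = 0 ∨ 2 ≤ lam.part lam.length)) :
    {nu : StrictPartition | lam.AddBox nu ∧ lam.length < nu.length} = (∅ : Set StrictPartition) := by
  ext nu
  simp only [Set.mem_setOf_eq, Set.mem_empty_iff_false, iff_false, not_and]
  intro hab hlen
  rcases addbox_classify lam nu hab with ⟨hlen', _⟩ | ⟨_, hadd', _⟩
  · omega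
  · exact hadd hadd'

theorem main_sum :
    (∑ᶠ nu ∈ {nu : StrictPartition | lam.AddBox nu ∧ lam.length < nu.length},
        1 / (H nu : ℚ)) +
      2 * (∑ᶠ nu ∈ {nu : StrictPartition | lam.AddBox nu ∧ nu.length = lam.length},
        1 / (H nu : ℚ)) = 1 / (H lam : ℚ) := by
  classical
  have hlag := lag_sum lam
  rw [Finset.sum_insert (show (0:ℕ) ∉ Finset.Icc 1 lam.length by simp)] at hlag
  -- restrict the sum over Icc to Aset
  have hsubEq : ∑ r ∈ Finset.Icc 1 lam.length,
      (∏ j ∈ Finset.Icc 1 lam.length, (vnode lam r - ynode lam j)) /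
        (∏ j ∈ (insert 0 (Finset.Icc 1 lam.length)).erase r, (vnode lam r - vnode lam j)) =
      ∑ r ∈ Aset lam,
      (∏ j ∈ Finset.Icc 1 lam.length, (vnode lam r - ynode lam j)) /
        (∏ j ∈ (insert 0 (Finset.Icc 1 lam.length)).erase r, (vnode lam r - vnode lam j)) := by
    apply (Finset.sum_subset (Finset.filter_subset _ _) _).symm
    intro r hr hrA
    simp only [Aset, Finset.mem_filter, Finset.mem_Icc] at hr hrA
    have h1 : ¬ (r = 1 ∨ lam.part r + 1 < lam.part (r - 1)) := by tauto
    push_neg at h1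
    have hr2 : 2 ≤ r := by omega
    have := part_lt_part lam (r - 1) r (by omega) (by omega) hr.2
    have heq : lam.part (r - 1) = lam.part r + 1 := by omega
    rw [Tr_zero lam r hr2 hr.2 heq, zero_div]
  -- value of the terms on Aset
  have hTr : ∀ r ∈ Aset lam,
      (∏ j ∈ Finset.Icc 1 lam.length, (vnode lam r - ynode lam j)) /
        (∏ j ∈ (insert 0 (Finset.Icc 1 lam.length)).erase r, (vnode lam r - vnode lam j)) =
      2 * (lam.H : ℚ) / ((Ffun lam r).H : ℚ) := by
    intro r hr
    simp only [Aset, Finset.mem_filter, Finset.mem_Icc] at hr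
    obtain ⟨⟨hr1, hrℓ⟩, haddr⟩ := hr
    rw [Ffun_eq lam r hr1 hrℓ haddr]
    exact Tr_eq lam r hr1 hrℓ haddr
  rw [hsubEq, Finset.sum_congr rfl hTr] at hlag
  -- sums over the sets
  have hsum2 : (∑ᶠ nu ∈ {nu : StrictPartition | lam.AddBox nu ∧ nu.length = lam.length},
      1 / (H nu : ℚ)) = ∑ r ∈ Aset lam, 1 / ((Ffun lam r).H : ℚ) := by
    rw [hS2 lam, finsum_mem_coe_finset, Finset.sum_image
      (fun x hx y hy h => Ffun_injOn lam (Finset.mem_coe.mpr hx) (Finset.mem_coe.mpr hy) h)]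
  rw [hsum2]
  by_cases hadd : lam.length = 0 ∨ 2 ≤ lam.part lam.length
  · have hT0 :
        (∏ j ∈ Finset.Icc 1 lam.length, (vnode lam 0 - ynode lam j)) /
          (∏ j ∈ (insert 0 (Finset.Icc 1 lam.length)).erase 0, (vnode lam 0 - vnode lam j)) =
        (lam.H : ℚ) / ((nu0 lam hadd).H : ℚ) := T0_eq lam hadd
    rw [hT0] at hlag
    rw [hS1_pos lam hadd, finsum_mem_singleton]
    rw [eq_div_iff (H_ne_zero_Q lam), add_mul]
    rw [show (2 * ∑ r ∈ Aset lam, 1 / ((Ffun lam r).H : ℚ)) * (lam.H : ℚ) =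
        ∑ r ∈ Aset lam, 2 * (lam.H : ℚ) / ((Ffun lam r).H : ℚ) by
      rw [Finset.mul_sum, Finset.sum_mul]
      exact Finset.sum_congr rfl (fun r _ => by ring)]
    rw [show (1 / ((nu0 lam hadd).H : ℚ)) * (lam.H : ℚ) =
        (lam.H : ℚ) / ((nu0 lam hadd).H : ℚ) by ring]
    exact hlag
  · have hℓ : 1 ≤ lam.length := by
      by_contra hc
      exact hadd (Or.inl (by omega))
    have hp1 : lam.part lam.length = 1 := by
      have := part_pos lam lam.length hℓ (le_refl _)
      by_contra hc
      exact hadd (Or.inr (by omega))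
    have hT0 :
        (∏ j ∈ Finset.Icc 1 lam.length, (vnode lam 0 - ynode lam j)) /
          (∏ j ∈ (insert 0 (Finset.Icc 1 lam.length)).erase 0, (vnode lam 0 - vnode lam j)) =
        0 := by
      rw [T0_zero lam hℓ hp1, zero_div]
    rw [hT0, zero_add] at hlag
    rw [hS1_neg lam hadd, finsum_mem_empty, zero_add]
    rw [eq_div_iff (H_ne_zero_Q lam)]
    rw [show (2 * ∑ r ∈ Aset lam, 1 / ((Ffun lam r).H : ℚ)) * (lam.H : ℚ) =
        ∑ r ∈ Aset lam, 2 * (lam.H : ℚ) / ((Ffun lam r).H : ℚ) by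
      rw [Finset.mul_sum, Finset.sum_mul]
      exact Finset.sum_congr rfl (fun r _ => by ring)]
    exact hlag

end SP13

open StrictPartition in
/-- Theorem 3.3. -/
theorem statement13 (lam : StrictPartition) :
    D (fun nu => 1 / (H nu : ℚ)) lam = 0 ∧
    (∑ᶠ nu ∈ {nu : StrictPartition | lam.AddBox nu ∧ lam.length < nu.length},
        1 / (H nu : ℚ)) +
      2 * (∑ᶠ nu ∈ {nu : StrictPartition | lam.AddBox nu ∧ nu.length = lam.length},
        1 / (H nu : ℚ)) = 1 / (H lam : ℚ) := by
  have h := SP13.main_sum lam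
  refine ⟨?_, h⟩
  unfold StrictPartition.D
  simp only
  rw [h]
  ring
end

section
/- Let k be a nonnegative integer. Then there exist rational numbers ξ_0, ξ_1, ..., ξ_{k−1}, depending only on k, such that for every strict partition λ and every index i for which λ^{i+} := λ ∪ {□_i} (the strict partition obtained by adding a box of content x_i) exists, q_k(λ^{i+}) − q_k(λ) = Σ_{j=0}^{k−1} ξ_j · C(x_i,2)^j. Equivalently, q_k(λ^{i+}) − q_k(λ) = C(x_i+1,2)^k + C(x_i−1,2)^k − 2·C(x_i,2)^k. -/
open scoped BigOperators

lemma lemP : ∀ m : ℕ, ∃ c : ℕ → ℚ, (∀ j, m < 2*j → c j = 0) ∧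
    ∀ u : ℚ, u^m + (1-u)^m = ∑ j ∈ Finset.range (m+1), c j * (u*(u-1)/2)^j := by
  intro m
  induction m using Nat.strong_induction_on with
  | _ m ih =>
    match m with
    | 0 =>
      refine ⟨fun j => if j = 0 then 2 else 0, fun j hj => if_neg (by omega), fun u => ?_⟩
      norm_num
    | 1 =>
      refine ⟨fun j => if j = 0 then 1 else 0, fun j hj => if_neg (by omega), fun u => ?_⟩
      norm_num
    | (m+2) =>
      obtain ⟨c1, hc1, he1⟩ := ih (m+1) (by omega)
      obtain ⟨c2, hc2, he2⟩ := ih m (by omega)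
      refine ⟨fun j => c1 j + (if j = 0 then 0 else 2 * c2 (j-1)), fun j hj => ?_, fun u => ?_⟩
      · show c1 j + (if j = 0 then 0 else 2 * c2 (j-1)) = 0
        rw [hc1 j (by omega), if_neg (by omega), hc2 (j-1) (by omega)]
        ring
      · show u^(m+2) + (1-u)^(m+2) = ∑ j ∈ Finset.range (m+2+1),
          (c1 j + (if j = 0 then 0 else 2 * c2 (j-1))) * (u*(u-1)/2)^j
        have key : u^(m+2) + (1-u)^(m+2) =
            (u^(m+1) + (1-u)^(m+1)) + (u*(u-1)) * (u^m + (1-u)^m) := by ring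
        rw [key, he1 u, he2 u]
        set T : ℚ := u*(u-1)/2 with hT
        have hTT : u*(u-1) = 2*T := by rw [hT]; ring
        rw [hTT]
        have split : ∑ j ∈ Finset.range (m+2+1),
            (c1 j + (if j = 0 then 0 else 2 * c2 (j-1))) * T^j =
            ∑ j ∈ Finset.range (m+2+1), c1 j * T^j +
            ∑ j ∈ Finset.range (m+2+1), (if j = 0 then 0 else 2 * c2 (j-1)) * T^j := by
          rw [← Finset.sum_add_distrib]
          exact Finset.sum_congr rfl fun j _ => by ring
        rw [split]
        have b1 : ∑ j ∈ Finset.range (m+2+1), c1 j * T^j =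
            ∑ j ∈ Finset.range (m+1+1), c1 j * T^j := by
          rw [Finset.sum_range_succ, hc1 (m+2) (by omega)]
          simp
        have b2 : ∑ j ∈ Finset.range (m+2+1), (if j = 0 then 0 else 2 * c2 (j-1)) * T^j =
            2 * T * ∑ j ∈ Finset.range (m+1), c2 j * T^j := by
          rw [Finset.sum_range_succ' (fun j => (if j = 0 then 0 else 2 * c2 (j-1)) * T^j) (m+2)]
          simp only [Nat.succ_ne_zero, if_false, reduceIte, Nat.add_sub_cancel, zero_mul,
            add_zero, pow_zero, mul_one, if_pos rfl]
          rw [Finset.sum_range_succ, hc2 (m+1) (by omega)]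
          rw [Finset.mul_sum]
          simp only [mul_zero, zero_mul, add_zero]
          apply Finset.sum_congr rfl
          intro j hj
          ring
        rw [b1, b2]

lemma lemQ (k : ℕ) : ∃ ξ : ℕ → ℚ, ∀ u : ℚ,
    (u*(u-1)/2 + u)^k + (u*(u-1)/2 - (u-1))^k - 2*(u*(u-1)/2)^k =
      ∑ j ∈ Finset.range k, ξ j * (u*(u-1)/2)^j := by
  classical
  choose c hc0 hc1 using lemP
  refine ⟨fun j => ∑ i ∈ Finset.range k, (if i ≤ j then (k.choose i : ℚ) * c (k-i) (j-i) else 0),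
    fun u => ?_⟩
  set T : ℚ := u*(u-1)/2 with hT
  have hadd1 : (T + u)^k = ∑ i ∈ Finset.range (k+1), T^i * u^(k-i) * (k.choose i : ℚ) :=
    add_pow T u k
  have hadd2 : (T + (1-u))^k = ∑ i ∈ Finset.range (k+1), T^i * (1-u)^(k-i) * (k.choose i : ℚ) :=
    add_pow T (1-u) k
  have hTu : T - (u-1) = T + (1-u) := by ring
  rw [hTu, hadd1, hadd2, ← Finset.sum_add_distrib]
  have step1 : ∑ i ∈ Finset.range (k+1),
      (T^i * u^(k-i) * (k.choose i : ℚ) + T^i * (1-u)^(k-i) * (k.choose i : ℚ)) =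
      (∑ i ∈ Finset.range k, T^i * (u^(k-i) + (1-u)^(k-i)) * (k.choose i : ℚ)) + 2*T^k := by
    rw [Finset.sum_range_succ]
    congr 1
    · exact Finset.sum_congr rfl fun i _ => by ring
    · simp [Nat.sub_self, Nat.choose_self]
      ring
  rw [step1]
  have step2 : ∀ i ∈ Finset.range k,
      T^i * (u^(k-i) + (1-u)^(k-i)) * (k.choose i : ℚ) =
      ∑ j ∈ Finset.range k, (if i ≤ j then (k.choose i : ℚ) * c (k-i) (j-i) else 0) * T^j := by
    intro i hi
    rw [Finset.mem_range] at hi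
    rw [hc1 (k-i) u]
    have lhs_eq : (T^i * ∑ l ∈ Finset.range (k-i+1), c (k-i) l * T^l) * (k.choose i : ℚ) =
        ∑ l ∈ Finset.range (k-i+1), (k.choose i : ℚ) * c (k-i) l * T^(l+i) := by
      rw [Finset.mul_sum, Finset.sum_mul]
      apply Finset.sum_congr rfl
      intro l hl
      rw [pow_add]
      ring
    rw [lhs_eq]
    rw [Finset.sum_range_succ, hc0 (k-i) (k-i) (by omega), mul_zero, zero_mul, add_zero]
    simp only [ite_mul, zero_mul]
    rw [← Finset.sum_filter]
    have hfilter : (Finset.range k).filter (fun j => i ≤ j) = Finset.Ico i k := by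
      ext j; simp only [Finset.mem_filter, Finset.mem_range, Finset.mem_Ico]; omega
    rw [hfilter, Finset.sum_Ico_eq_sum_range, show k - i = k - i from rfl]
    apply Finset.sum_congr rfl
    intro l hl
    rw [show i + l - i = l by omega, show l + i = i + l by omega]
  rw [Finset.sum_congr rfl step2, Finset.sum_comm]
  have last : ∀ j ∈ Finset.range k,
      ∑ i ∈ Finset.range k, (if i ≤ j then (k.choose i : ℚ) * c (k-i) (j-i) else 0) * T^j =
      (∑ i ∈ Finset.range k, (if i ≤ j then (k.choose i : ℚ) * c (k-i) (j-i) else 0)) * T^j :=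
    fun j _ => (Finset.sum_mul _ _ _).symm
  rw [Finset.sum_congr rfl last]
  show _ + 2*T^k - 2*T^k = _
  rw [add_sub_cancel_right]

namespace StrictPartition

lemma part_mem {lam : StrictPartition} {i : ℕ} (h : lam.part i ≠ 0) :
    lam.part i ∈ lam.parts := by
  unfold part at *
  rcases lt_or_ge (i - 1) lam.parts.length with hl | hl
  · rw [List.getD_eq_getElem _ _ hl]; exact List.getElem_mem _
  · rw [List.getD_eq_default _ _ hl] at h; simp at h

lemma part_pos_lt {lam : StrictPartition} {i : ℕ} (h : lam.part i ≠ 0) :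
    i - 1 < lam.parts.length := by
  by_contra hl
  rw [part, List.getD_eq_default _ _ (le_of_not_gt hl)] at h; simp at h

lemma part_le_size (lam : StrictPartition) (i : ℕ) : lam.part i ≤ lam.size := by
  rcases eq_or_ne (lam.part i) 0 with h | h
  · simp [h]
  · exact List.single_le_sum (by simp) _ (part_mem h)

lemma part_le_length {lam : StrictPartition} {i : ℕ} (h : lam.part i ≠ 0) :
    i ≤ lam.length := by
  have := part_pos_lt h
  unfold length; omega

lemma mem_cells {lam : StrictPartition} {b : ℕ × ℕ} :
    b ∈ lam.cells ↔ 1 ≤ b.1 ∧ b.1 < b.2 ∧ b.2 ≤ b.1 + lam.part b.1 := by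
  constructor
  · intro h; exact (Finset.mem_filter.mp h).2
  · intro h
    have hp : lam.part b.1 ≠ 0 := by omega
    have h1 := part_le_length hp
    have h2 := part_le_size lam b.1
    refine Finset.mem_filter.mpr ⟨Finset.mem_product.mpr ⟨?_, ?_⟩, h⟩ <;>
      simp only [Finset.mem_range] <;> omega

lemma part_lt_part {lam : StrictPartition} {i j : ℕ} (h1 : 1 ≤ i) (hij : i < j)
    (hj : lam.part j ≠ 0) : lam.part j < lam.part i := by
  have hjl := part_pos_lt hj
  have hil : i - 1 < lam.parts.length := by omega
  have hs := lam.sorted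
  rw [List.pairwise_iff_getElem] at hs
  have := hs (i-1) (j-1) (by omega) hjl (by omega)
  rw [part, part, List.getD_eq_getElem _ _ hjl, List.getD_eq_getElem _ _ hil]
  exact this

lemma part_le_part {lam : StrictPartition} {i j : ℕ} (h1 : 1 ≤ i) (hij : i ≤ j)
    (hj : lam.part j ≠ 0) : lam.part j ≤ lam.part i := by
  rcases eq_or_lt_of_le hij with rfl | h
  · exact le_rfl
  · exact (part_lt_part h1 h hj).le

lemma mem_parts_iff {lam : StrictPartition} {p : ℕ} :
    p ∈ lam.parts ↔ p ≠ 0 ∧ ∃ r, 1 ≤ r ∧ lam.part r = p := by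
  constructor
  · intro h
    obtain ⟨n, hn, he⟩ := List.mem_iff_getElem.mp h
    refine ⟨(lam.pos p h).ne', n+1, by omega, ?_⟩
    rw [part]; simpa using (List.getD_eq_getElem _ 0 (by simpa using hn)).trans he
  · rintro ⟨h0, r, hr, rfl⟩
    exact part_mem h0


lemma mem_cells' {lam : StrictPartition} {i j : ℕ} :
    (i, j) ∈ lam.cells ↔ 1 ≤ i ∧ i < j ∧ j ≤ i + lam.part i := mem_cells

/-- Forward analysis of adding one box. -/
lemma insert_part {lam lam' : StrictPartition} {b : ℕ × ℕ} (hb : b ∉ lam.cells)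
    (h : lam'.cells = insert b lam.cells) :
    b.2 = b.1 + lam.part b.1 + 1 ∧ lam'.part b.1 = lam.part b.1 + 1 ∧
      ∀ r, 1 ≤ r → r ≠ b.1 → lam'.part r = lam.part r := by
  have hbm : b ∈ lam'.cells := by rw [h]; exact Finset.mem_insert_self b _
  obtain ⟨hb1, hb2, hb3⟩ := mem_cells.mp hbm
  have hge : ∀ r, 1 ≤ r → lam.part r ≤ lam'.part r := by
    intro r hr
    rcases eq_or_ne (lam.part r) 0 with h0 | h0
    · omega
    · have hm : (r, r + lam.part r) ∈ lam'.cells := by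
        rw [h]; exact Finset.mem_insert_of_mem (mem_cells'.mpr ⟨hr, by omega, by omega⟩)
      have := mem_cells'.mp hm; omega
  have hle : ∀ r, 1 ≤ r → r ≠ b.1 → lam'.part r ≤ lam.part r := by
    intro r hr hrb
    by_contra hlt
    have hm : ((r, r + lam.part r + 1) : ℕ × ℕ) ∈ lam'.cells :=
      mem_cells'.mpr ⟨hr, by omega, by omega⟩
    rw [h, Finset.mem_insert] at hm
    rcases hm with he | hm
    · exact hrb (Prod.ext_iff.mp he).1
    · have := mem_cells'.mp hm
      omega
  have hnb : b.1 + lam.part b.1 < b.2 := by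
    by_contra hc
    exact hb (mem_cells.mpr ⟨hb1, hb2, by omega⟩)
  have hub : lam'.part b.1 ≤ lam.part b.1 + 1 := by
    by_contra hc
    have c1 : ((b.1, b.1 + lam.part b.1 + 1) : ℕ × ℕ) ∈ lam'.cells :=
      mem_cells'.mpr ⟨hb1, by omega, by omega⟩
    have c2 : ((b.1, b.1 + lam.part b.1 + 2) : ℕ × ℕ) ∈ lam'.cells :=
      mem_cells'.mpr ⟨hb1, by omega, by omega⟩
    rw [h, Finset.mem_insert] at c1 c2
    rcases c1 with e1 | m1
    · rcases c2 with e2 | m2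
      · have f1 := (Prod.ext_iff.mp e1).2
        have f2 := (Prod.ext_iff.mp e2).2
        omega
      · have := mem_cells'.mp m2; omega
    · have := mem_cells'.mp m1; omega
  refine ⟨by omega, by omega, fun r hr hrb => le_antisymm (hle r hr hrb) (hge r hr)⟩


lemma insert_parts {lam lam' : StrictPartition} {b : ℕ × ℕ} (hb : b ∉ lam.cells)
    (h : lam'.cells = insert b lam.cells) :
    lam'.parts.toFinset = insert (content b) (lam.parts.toFinset.erase (content b - 1)) ∧
      content b ∉ lam.parts ∧ (2 ≤ content b → content b - 1 ∈ lam.parts) ∧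
      content b = lam.part b.1 + 1 := by
  obtain ⟨E1, E2, E3⟩ := insert_part hb h
  have hbm : b ∈ lam'.cells := by rw [h]; exact Finset.mem_insert_self b _
  obtain ⟨hb1, hb2, hb3⟩ := mem_cells.mp hbm
  set i := b.1 with hi
  have hx : content b = lam.part i + 1 := by unfold content; omega
  have hxne : content b ≠ 0 := by omega
  -- strictness of lam' around i
  have hstep : 2 ≤ i → content b < lam.part (i - 1) := by
    intro h2
    have h4 : lam'.part (i-1) = lam.part (i-1) := E3 (i-1) (by omega) (by omega)
    have := part_lt_part (lam := lam') (i := i - 1) (j := i) (by omega) (by omega)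
      (by omega)
    omega
  have hnot : content b ∉ lam.parts := by
    intro hmem
    obtain ⟨h0, r, hr, hpr⟩ := mem_parts_iff.mp hmem
    have hri : r ≠ i := by
      intro hri; rw [hri] at hpr; omega
    have hnlt : ¬ (i < r) := by
      intro hlt
      have := part_lt_part (lam := lam) (by omega : 1 ≤ i) hlt (by omega)
      omega
    have h2 : 2 ≤ i := by omega
    have := hstep h2
    have hle' : lam.part (i-1) ≤ lam.part r :=
      part_le_part (by omega) (by omega) (by omega)
    omega
  have hprev : 2 ≤ content b → content b - 1 ∈ lam.parts := by
    intro h2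
    have : lam.part i ≠ 0 := by omega
    have := part_mem this
    rw [hx]; simpa using this
  refine ⟨?_, hnot, hprev, hx⟩
  ext p
  simp only [List.mem_toFinset, Finset.mem_insert, Finset.mem_erase]
  constructor
  · intro hp
    obtain ⟨h0, r, hr, hpr⟩ := mem_parts_iff.mp hp
    rcases eq_or_ne r i with rfl | hri
    · left; omega
    · right
      have hlr : lam.part r = p := by rw [← E3 r hr hri]; exact hpr
      have hpi : p ≠ content b - 1 := by
        intro hpe
        have hpi' : lam.part r = lam.part i := by omega
        rcases Nat.lt_or_ge r i with hlt | hge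
        · have := part_lt_part (lam := lam) hr hlt (by omega); omega
        · have := part_lt_part (lam := lam) (by omega : 1 ≤ i) (by omega : i < r)
            (by omega); omega
      exact ⟨hpi, mem_parts_iff.mpr ⟨h0, r, hr, hlr⟩⟩
  · rintro (rfl | ⟨hpe, hp⟩)
    · exact mem_parts_iff.mpr ⟨hxne, i, by omega, by omega⟩
    · obtain ⟨h0, r, hr, hpr⟩ := mem_parts_iff.mp hp
      have hri : r ≠ i := by intro hri; rw [hri] at hpr; omega
      exact mem_parts_iff.mpr ⟨h0, r, hr, by rw [E3 r hr hri]; exact hpr⟩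


lemma part_eq_getD (lam : StrictPartition) (j : ℕ) : lam.part j = lam.parts.getD (j-1) 0 := rfl

/-- Construction: increment part `x-1` to `x`. -/
lemma con_inc {lam : StrictPartition} {x : ℕ} (h2 : 2 ≤ x) (hm : x - 1 ∈ lam.parts)
    (hn : x ∉ lam.parts) :
    ∃ (mu : StrictPartition) (b : ℕ × ℕ), b ∉ lam.cells ∧ mu.cells = insert b lam.cells ∧
      content b = x := by
  obtain ⟨n, hnl, hne⟩ := List.mem_iff_getElem.mp hm
  have hnx : ∀ a (ha : a < lam.parts.length), lam.parts[a] ≠ x := by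
    intro a ha hax
    exact hn (hax ▸ List.getElem_mem ha)
  have hp := lam.sorted
  rw [List.pairwise_iff_getElem] at hp
  set L := lam.parts.set n x with hL
  have hLl : L.length = lam.parts.length := by simp [hL]
  have hLg : ∀ a (ha : a < lam.parts.length), L[a]'(by omega) = if n = a then x else lam.parts[a] := by
    intro a ha; exact List.getElem_set (by simpa using ha)
  have hsort : L.Pairwise (· > ·) := by
    rw [List.pairwise_iff_getElem]
    intro a c ha hc hac
    rw [hLg a (by omega), hLg c (by omega)]
    rcases eq_or_ne n a with rfl | hna
    · rw [if_pos rfl, if_neg (by omega)]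
      have := hp n c (by omega) (by omega) hac
      omega
    · rw [if_neg hna]
      rcases eq_or_ne n c with rfl | hnc
      · rw [if_pos rfl]
        have h1 := hp a n (by omega) (by omega) hac
        have h3 := hnx a (by omega)
        omega
      · rw [if_neg hnc]
        exact hp a c (by omega) (by omega) hac
  have hposL : ∀ p ∈ L, 0 < p := by
    intro p hp'
    rcases List.mem_or_eq_of_mem_set hp' with h | rfl
    · exact lam.pos p h
    · omega
  refine ⟨⟨L, hposL, hsort⟩, (n+1, n+1+x), ?_, ?_, ?_⟩
  · intro hmem
    have := mem_cells'.mp hmem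
    have : lam.part (n+1) = x - 1 := by
      rw [part_eq_getD]; simpa using (List.getD_eq_getElem _ 0 (by simpa using hnl)).trans hne
    omega
  · have hmupart : ∀ j, 1 ≤ j → part ⟨L, hposL, hsort⟩ j = if j = n + 1 then x else lam.part j := by
      intro j hj
      rcases lt_or_ge (j-1) lam.parts.length with hl | hl
      · rw [part_eq_getD, part_eq_getD]
        simp only
        rw [List.getD_eq_getElem _ _ (by omega), hLg (j-1) hl,
          List.getD_eq_getElem _ _ hl]
        by_cases hje : j = n + 1
        · rw [if_pos hje, if_pos (by omega)]
        · rw [if_neg (by omega), if_neg hje]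
      · rw [part_eq_getD, part_eq_getD]
        simp only
        rw [List.getD_eq_default _ _ (by omega), List.getD_eq_default _ _ hl,
          if_neg (by omega)]
    have hpn1 : lam.part (n+1) = x - 1 := by
      rw [part_eq_getD]; simpa using (List.getD_eq_getElem _ 0 (by simpa using hnl)).trans hne
    ext ⟨c1, c2⟩
    rw [mem_cells', Finset.mem_insert, mem_cells', Prod.mk.injEq]
    constructor
    · intro ⟨hc1, hc2, hc3⟩
      rcases eq_or_ne c1 (n+1) with rfl | hcn
      · rw [hmupart _ hc1, if_pos rfl] at hc3
        rcases eq_or_ne c2 (n+1+x) with rfl | hc2x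
        · left; exact ⟨rfl, rfl⟩
        · right; exact ⟨hc1, hc2, by omega⟩
      · rw [hmupart _ hc1, if_neg hcn] at hc3
        right; exact ⟨hc1, hc2, hc3⟩
    · rintro (⟨rfl, rfl⟩ | ⟨hc1, hc2, hc3⟩)
      · refine ⟨by omega, by omega, ?_⟩
        rw [hmupart _ (by omega), if_pos rfl]
      · refine ⟨hc1, hc2, ?_⟩
        rw [hmupart _ hc1]
        rcases eq_or_ne c1 (n+1) with rfl | hcn
        · rw [if_pos rfl]; omega
        · rw [if_neg hcn]; exact hc3
  · simp [content]


/-- Construction: decrement part `p` to `p-1`, when `p ≥ 2`. -/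
lemma con_dec {lam : StrictPartition} {p : ℕ} (h2 : 2 ≤ p) (hm : p ∈ lam.parts)
    (hn : p - 1 ∉ lam.parts) :
    ∃ (mu : StrictPartition) (b : ℕ × ℕ), b ∈ lam.cells ∧ mu.cells = lam.cells.erase b ∧
      content b = p := by
  obtain ⟨n, hnl, hne⟩ := List.mem_iff_getElem.mp hm
  have hnx : ∀ a (ha : a < lam.parts.length), lam.parts[a] ≠ p - 1 := by
    intro a ha hax
    exact hn (hax ▸ List.getElem_mem ha)
  have hp := lam.sorted
  rw [List.pairwise_iff_getElem] at hp
  set L := lam.parts.set n (p-1) with hL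
  have hLl : L.length = lam.parts.length := by simp [hL]
  have hLg : ∀ a (ha : a < lam.parts.length), L[a]'(by omega) = if n = a then p - 1 else lam.parts[a] := by
    intro a ha; exact List.getElem_set (by simpa using ha)
  have hsort : L.Pairwise (· > ·) := by
    rw [List.pairwise_iff_getElem]
    intro a c ha hc hac
    rw [hLg a (by omega), hLg c (by omega)]
    rcases eq_or_ne n a with rfl | hna
    · rw [if_pos rfl, if_neg (by omega)]
      have h1 := hp n c (by omega) (by omega) hac
      have h3 := hnx c (by omega)
      omega
    · rw [if_neg hna]
      rcases eq_or_ne n c with rfl | hnc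
      · rw [if_pos rfl]
        have h1 := hp a n (by omega) (by omega) hac
        omega
      · rw [if_neg hnc]
        exact hp a c (by omega) (by omega) hac
  have hposL : ∀ q ∈ L, 0 < q := by
    intro q hq'
    rcases List.mem_or_eq_of_mem_set hq' with h | rfl
    · exact lam.pos q h
    · omega
  have hpn1 : lam.part (n+1) = p := by
    rw [part_eq_getD]; simpa using (List.getD_eq_getElem _ 0 (by simpa using hnl)).trans hne
  refine ⟨⟨L, hposL, hsort⟩, (n+1, n+1+p), mem_cells'.mpr ⟨by omega, by omega, by omega⟩, ?_, by simp [content]⟩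
  have hmupart : ∀ j, 1 ≤ j → part ⟨L, hposL, hsort⟩ j = if j = n + 1 then p - 1 else lam.part j := by
    intro j hj
    rcases lt_or_ge (j-1) lam.parts.length with hl | hl
    · rw [part_eq_getD, part_eq_getD]
      simp only
      rw [List.getD_eq_getElem _ _ (by omega), hLg (j-1) hl,
        List.getD_eq_getElem _ _ hl]
      by_cases hje : j = n + 1
      · rw [if_pos hje, if_pos (by omega)]
      · rw [if_neg (by omega), if_neg hje]
    · rw [part_eq_getD, part_eq_getD]
      simp only
      rw [List.getD_eq_default _ _ (by omega), List.getD_eq_default _ _ hl,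
        if_neg (by omega)]
  ext ⟨c1, c2⟩
  simp only [mem_cells', Finset.mem_erase, ne_eq, Prod.mk.injEq, not_and]
  constructor
  · intro ⟨hc1, hc2, hc3⟩
    rcases eq_or_ne c1 (n+1) with rfl | hcn
    · rw [hmupart _ hc1, if_pos rfl] at hc3
      exact ⟨fun _ => by omega, hc1, hc2, by omega⟩
    · rw [hmupart _ hc1, if_neg hcn] at hc3
      exact ⟨fun h => absurd h hcn, hc1, hc2, hc3⟩
  · intro ⟨hne', hc1, hc2, hc3⟩
    refine ⟨hc1, hc2, ?_⟩
    rw [hmupart _ hc1]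
    rcases eq_or_ne c1 (n+1) with rfl | hcn
    · rw [if_pos rfl]
      have := hne' rfl
      omega
    · rw [if_neg hcn]; exact hc3

/-- Construction: remove a part equal to 1. -/
lemma con_one {lam : StrictPartition} (hm : 1 ∈ lam.parts) :
    ∃ (mu : StrictPartition) (b : ℕ × ℕ), b ∈ lam.cells ∧ mu.cells = lam.cells.erase b ∧
      content b = 1 := by
  obtain ⟨n, hnl, hne⟩ := List.mem_iff_getElem.mp hm
  have hp := lam.sorted
  rw [List.pairwise_iff_getElem] at hp
  have hlast : n = lam.parts.length - 1 := by
    by_contra hc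
    have h1 := hp n (n+1) (by omega) (by omega) (by omega)
    have h2 := lam.pos _ (List.getElem_mem (show n+1 < lam.parts.length by omega))
    omega
  set L := lam.parts.dropLast with hL
  have hLl : L.length = lam.parts.length - 1 := by simp [hL]
  have hsort : L.Pairwise (· > ·) := lam.sorted.sublist (List.dropLast_sublist _)
  have hposL : ∀ q ∈ L, 0 < q := fun q hq => lam.pos q ((List.dropLast_sublist _).mem hq)
  set len := lam.parts.length with hlen
  have hpn1 : lam.part len = 1 := by
    rw [part_eq_getD]
    rw [List.getD_eq_getElem _ 0 (by omega)]
    have hl1 : len - 1 = n := by omega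
    simp only [hl1]
    exact hne
  have hmupart : ∀ j, 1 ≤ j → part ⟨L, hposL, hsort⟩ j = if j = len then 0 else lam.part j := by
    intro j hj
    rcases lt_or_ge (j-1) (len - 1) with hl | hl
    · rw [part_eq_getD, part_eq_getD]
      simp only
      rw [List.getD_eq_getElem _ _ (by rw [List.length_dropLast]; omega), List.getD_eq_getElem _ _ (by omega : j - 1 < lam.parts.length),
        if_neg (by omega)]
      exact lam.parts.getElem_dropLast _
    · rw [part_eq_getD]
      simp only
      rw [List.getD_eq_default _ _ (by rw [List.length_dropLast]; omega)]
      by_cases hje : j = len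
      · rw [if_pos hje]
      · rw [if_neg hje, part_eq_getD, List.getD_eq_default _ _ (by omega)]
  refine ⟨⟨L, hposL, hsort⟩, (len, len + 1), mem_cells'.mpr ⟨by omega, by omega, by omega⟩, ?_, by simp [content]⟩
  ext ⟨c1, c2⟩
  simp only [mem_cells', Finset.mem_erase, ne_eq, Prod.mk.injEq, not_and]
  constructor
  · intro ⟨hc1, hc2, hc3⟩
    rw [hmupart _ hc1] at hc3
    rcases eq_or_ne c1 len with rfl | hcn
    · rw [if_pos rfl] at hc3; omega
    · rw [if_neg hcn] at hc3
      exact ⟨fun h => absurd h hcn, hc1, hc2, hc3⟩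
  · intro ⟨hne', hc1, hc2, hc3⟩
    refine ⟨hc1, hc2, ?_⟩
    rw [hmupart _ hc1]
    rcases eq_or_ne c1 len with rfl | hcn
    · have := hne' rfl; omega
    · rw [if_neg hcn]; exact hc3


lemma outer_eq (lam : StrictPartition) :
    lam.outerContents =
      ↑(lam.parts.toFinset.filter (fun p => p - 1 ∉ lam.parts.toFinset)) := by
  ext c
  simp only [outerContents, Set.mem_image, Finset.coe_filter, Set.mem_setOf_eq,
    List.mem_toFinset]
  constructor
  · rintro ⟨b, ⟨hbc, mu, hmu⟩, rfl⟩
    have h1 : lam.cells = insert b mu.cells := by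
      rw [hmu, Finset.insert_erase hbc]
    have h2 : b ∉ mu.cells := by rw [hmu]; exact Finset.notMem_erase b _
    obtain ⟨hS, hnot, hprev, hx⟩ := insert_parts h2 h1
    have hmem : content b ∈ lam.parts := by
      have : content b ∈ lam.parts.toFinset := by
        rw [hS]; exact Finset.mem_insert_self _ _
      simpa using this
    refine ⟨hmem, fun hc => ?_⟩
    have : content b - 1 ∈ lam.parts.toFinset := by simpa using hc
    rw [hS, Finset.mem_insert] at this
    rcases this with he | hm
    · omega
    · exact absurd hm (Finset.notMem_erase _ _)
  · rintro ⟨hc, hc1⟩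
    have hc1' : c - 1 ∉ lam.parts := fun h => hc1 h
    rcases Nat.lt_or_ge c 2 with h2 | h2
    · have hc1eq : c = 1 := by
        have := lam.pos c hc; omega
      subst hc1eq
      obtain ⟨mu, b, hb1, hb2, hb3⟩ := con_one hc
      exact ⟨b, ⟨hb1, mu, hb2⟩, hb3⟩
    · obtain ⟨mu, b, hb1, hb2, hb3⟩ := con_dec h2 hc hc1'
      exact ⟨b, ⟨hb1, mu, hb2⟩, hb3⟩

lemma inner_eq (lam : StrictPartition) :
    lam.innerContents =
      ↑(insert 1 ((lam.parts.toFinset.filter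
          (fun p => p + 1 ∉ lam.parts.toFinset)).image (· + 1))) := by
  ext c
  have hR : c ∈ ((insert 1 ((lam.parts.toFinset.filter
          (fun p => p + 1 ∉ lam.parts.toFinset)).image (· + 1)) : Finset ℕ) : Set ℕ) ↔
      c = 1 ∨ ∃ p, (p ∈ lam.parts ∧ p + 1 ∉ lam.parts) ∧ p + 1 = c := by
    rw [Finset.mem_coe, Finset.mem_insert]
    apply or_congr Iff.rfl
    rw [Finset.mem_image]
    constructor
    · rintro ⟨p, hp, he⟩
      have := Finset.mem_filter.mp hp
      exact ⟨p, ⟨by simpa using this.1, fun h => this.2 (by simpa using h)⟩, he⟩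
    · rintro ⟨p, ⟨h1, h2⟩, he⟩
      exact ⟨p, Finset.mem_filter.mpr ⟨by simpa using h1, fun h => h2 (by simpa using h)⟩, he⟩
  rw [hR]
  constructor
  · rintro (rfl | ⟨b, ⟨hbc, mu, hmu⟩, rfl⟩)
    · exact Or.inl rfl
    · obtain ⟨hS, hnot, hprev, hx⟩ := insert_parts hbc hmu
      rcases Nat.lt_or_ge (content b) 2 with h2 | h2
      · left; omega
      · right
        refine ⟨content b - 1, ⟨hprev h2, fun hc => ?_⟩, by omega⟩
        have he : content b - 1 + 1 = content b := by omega
        rw [he] at hc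
        exact hnot hc
  · rintro (rfl | ⟨p, ⟨hp, hp1⟩, rfl⟩)
    · exact Or.inl rfl
    · right
      obtain ⟨mu, b, hb1, hb2, hb3⟩ := con_inc (by have := lam.pos p hp; omega)
        (by simpa using hp) hp1
      exact ⟨b, ⟨hb1, mu, hb2⟩, hb3⟩


lemma q_eq (k : ℕ) (lam : StrictPartition) :
    q k lam = ((Nat.choose 1 2 : ℚ)) ^ k +
      ∑ p ∈ lam.parts.toFinset,
        ((((p+1).choose 2 : ℚ)) ^ k - ((p.choose 2 : ℚ)) ^ k) := by
  classical
  have hpos : ∀ p ∈ lam.parts.toFinset, 1 ≤ p := by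
    intro p hp; exact lam.pos p (by simpa using hp)
  rw [q, inner_eq, outer_eq, finsum_mem_coe_finset, finsum_mem_coe_finset]
  set S := lam.parts.toFinset with hS
  have h1 : (1 : ℕ) ∉ (S.filter (fun p => p + 1 ∉ S)).image (· + 1) := by
    intro hc
    obtain ⟨p, hp, he⟩ := Finset.mem_image.mp hc
    have := hpos p (Finset.mem_filter.mp hp).1
    omega
  rw [Finset.sum_insert h1]
  rw [Finset.sum_image (by intro a _ b _ h; simpa using h)]
  have e1 : ∑ p ∈ S.filter (fun p => p + 1 ∈ S), (((p+1).choose 2 : ℚ)) ^ k +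
      ∑ p ∈ S.filter (fun p => p + 1 ∉ S), (((p+1).choose 2 : ℚ)) ^ k =
      ∑ p ∈ S, (((p+1).choose 2 : ℚ)) ^ k :=
    Finset.sum_filter_add_sum_filter_not S _ _
  have e2 : ∑ p ∈ S.filter (fun p => p - 1 ∈ S), ((p.choose 2 : ℚ)) ^ k +
      ∑ p ∈ S.filter (fun p => p - 1 ∉ S), ((p.choose 2 : ℚ)) ^ k =
      ∑ p ∈ S, ((p.choose 2 : ℚ)) ^ k :=
    Finset.sum_filter_add_sum_filter_not S _ _
  have e3 : ∑ p ∈ S.filter (fun p => p + 1 ∈ S), (((p+1).choose 2 : ℚ)) ^ k =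
      ∑ p ∈ S.filter (fun p => p - 1 ∈ S), ((p.choose 2 : ℚ)) ^ k := by
    rw [show S.filter (fun p => p - 1 ∈ S) =
        (S.filter (fun p => p + 1 ∈ S)).image (· + 1) by
      ext c
      simp only [Finset.mem_image, Finset.mem_filter]
      constructor
      · rintro ⟨hc, hc1⟩
        refine ⟨c - 1, ⟨hc1, ?_⟩, by have := hpos c hc; omega⟩
        have := hpos c hc
        rw [show c - 1 + 1 = c by omega]
        exact hc
      · rintro ⟨p, ⟨hp, hp1⟩, rfl⟩
        exact ⟨hp1, by simpa using hp⟩]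
    rw [Finset.sum_image (by intro a _ b _ h; simpa using h)]
  have e4 : ∑ p ∈ S, ((((p+1).choose 2 : ℚ)) ^ k - ((p.choose 2 : ℚ)) ^ k) =
      ∑ p ∈ S, (((p+1).choose 2 : ℚ)) ^ k - ∑ p ∈ S, ((p.choose 2 : ℚ)) ^ k :=
    Finset.sum_sub_distrib _ _
  linarith [e1, e2, e3, e4]

lemma q_delta (k : ℕ) {lam lam' : StrictPartition} {b : ℕ × ℕ} (hb : b ∉ lam.cells)
    (h : lam'.cells = insert b lam.cells) :
    q k lam' - q k lam =
      (((content b + 1).choose 2 : ℚ)) ^ k + (((content b - 1).choose 2 : ℚ)) ^ k -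
        2 * (((content b).choose 2 : ℚ)) ^ k := by
  classical
  obtain ⟨hS, hnot, hprev, hx⟩ := insert_parts hb h
  set x := content b with hxb
  set S := lam.parts.toFinset with hSd
  set g : ℕ → ℚ := fun p => (((p+1).choose 2 : ℚ)) ^ k - ((p.choose 2 : ℚ)) ^ k with hg
  have hxS : x ∉ S := by simpa [hSd] using hnot
  have hsum' : ∑ p ∈ lam'.parts.toFinset, g p = g x + ∑ p ∈ S.erase (x-1), g p := by
    rw [hS, Finset.sum_insert (fun hc => hxS (Finset.mem_of_mem_erase hc))]
  have hsum : ∑ p ∈ S, g p = g (x-1) + ∑ p ∈ S.erase (x-1), g p := by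
    rcases Nat.lt_or_ge x 2 with h2 | h2
    · have hx1 : x = 1 := by omega
      have h0 : (x - 1 : ℕ) = 0 := by omega
      have h0S : (0 : ℕ) ∉ S := by
        intro hc; have := lam.pos 0 (by simpa [hSd] using hc); omega
      rw [h0, Finset.erase_eq_of_notMem h0S]
      have : g 0 = 0 := by simp [hg]
      rw [this]; ring
    · have hmem : x - 1 ∈ S := by simpa [hSd] using hprev h2
      rw [← Finset.sum_erase_add S g hmem]; ring
  rw [q_eq k lam', q_eq k lam, hsum', hsum]
  have hgx : g x - g (x-1) = (((x + 1).choose 2 : ℚ)) ^ k +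
      (((x - 1).choose 2 : ℚ)) ^ k - 2 * ((x.choose 2 : ℚ)) ^ k := by
    have hx1 : x - 1 + 1 = x := by omega
    rw [hg]; simp only [hx1]; ring
  rw [← hgx]; ring


end StrictPartition


open StrictPartition in
/-- Theorem 3.5: the coefficients `ξ_j` depend only on `k`; `λ⁺ = λ ∪ {□}` ranges over
the strict partitions obtained from `λ` by adding one box `□` (whose content is then
automatically one of the inner-corner contents `x_i` of `λ`). -/
theorem statement15 (k : ℕ) :
    ∃ ξ : ℕ → ℚ,
      ∀ (lam lam' : StrictPartition) (b : ℕ × ℕ), b ∉ lam.cells →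
        lam'.cells = insert b lam.cells →
        q k lam' - q k lam =
          (∑ j ∈ Finset.range k, ξ j * ((content b).choose 2 : ℚ) ^ j) ∧
        q k lam' - q k lam =
          ((content b + 1).choose 2 : ℚ) ^ k + ((content b - 1).choose 2 : ℚ) ^ k -
            2 * ((content b).choose 2 : ℚ) ^ k := by
  obtain ⟨ξ, hξ⟩ := lemQ k
  refine ⟨ξ, fun lam lam' b hb h => ?_⟩
  have hdelta := q_delta k hb h
  refine ⟨?_, hdelta⟩
  rw [hdelta]
  have hx1 : 1 ≤ content b := by
    have hbm : b ∈ lam'.cells := by rw [h]; exact Finset.mem_insert_self b _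
    have := mem_cells.mp hbm
    unfold content; omega
  have hu := hξ ((content b : ℕ) : ℚ)
  have c1 : ((content b).choose 2 : ℚ) =
      (content b : ℚ) * ((content b : ℚ) - 1) / 2 := by rw [Nat.cast_choose_two]
  have c2 : ((content b + 1).choose 2 : ℚ) =
      (content b : ℚ) * ((content b : ℚ) - 1) / 2 + (content b : ℚ) := by
    rw [Nat.cast_choose_two]; push_cast; ring
  have c3 : ((content b - 1).choose 2 : ℚ) =
      (content b : ℚ) * ((content b : ℚ) - 1) / 2 - ((content b : ℚ) - 1) := by
    rw [Nat.cast_choose_two]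
    have hcast : ((content b - 1 : ℕ) : ℚ) = (content b : ℚ) - 1 := by
      push_cast [hx1]; ring
    rw [hcast]; ring
  rw [c1, c2, c3]
  exact hu
end
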